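/- arXiv:2402.04604 — 12 statements merged into one kernel-verified Lean document; each statement's English description precedes it below -/
import Mathlib

section
/- For b ∈ L and σ ∈ G, an element x ∈ L lies in the radical of φ_{b,σ} if and only if σ⁻¹(b·x) = −b·σ(x). -/
/-- For `b ∈ L` and `σ ∈ Gal(L/K)`, an element `x ∈ L` lies in the radical of
`φ_{b,σ}` (i.e. `φ_{b,σ}(x,y) = 0` for all `y`) if and only if `σ⁻¹(b·x) = -(b·σ(x))`. -/
theorem mem_radical_iff (K L : Type*) [Field K] [Field L] [Algebra K L]
    [FiniteDimensional K L] [IsGalois K L] (h2 : (2 : K) ≠ 0)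
    (b : L) (σ : L ≃ₐ[K] L) (x : L) :
    (∀ y : L, Algebra.trace K L (b * (x * σ y + σ x * y)) = 0) ↔
      σ⁻¹ (b * x) = -(b * σ x) := by
  have key : ∀ y : L, Algebra.trace K L (b * (x * σ y + σ x * y)) =
      Algebra.traceForm K L (σ⁻¹ (b * x) + b * σ x) y := by
    intro y
    have h1 : Algebra.trace K L (b * x * σ y) =
        Algebra.trace K L (σ⁻¹ (b * x) * y) := by
      rw [← Algebra.trace_eq_of_algEquiv σ (σ⁻¹ (b * x) * y)]
      have hs : ∀ z : L, σ (σ⁻¹ z) = z := fun z => σ.apply_symm_apply z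
      congr 1
      simp [mul_comm, mul_left_comm, hs]
    simp only [Algebra.traceForm_apply, LinearMap.add_apply, add_mul, map_add, mul_add,
      ← mul_assoc]
    rw [h1]
  constructor
  · intro h
    have hz : σ⁻¹ (b * x) + b * σ x = 0 := by
      apply (traceForm_nondegenerate K L).1
      intro y
      rw [← key y, h y]
    linear_combination hz
  · intro h y
    rw [key y, h]
    simp
end

section
/- Let b ∈ L be nonzero and σ ∈ G. Then φ_{b,σ} is degenerate if and only if there exists a nonzero c ∈ L with −σ(b)·b⁻¹ = σ²(c)·c⁻¹; equivalently, if and only if N_{L/F}(−σ(b)/b) = 1 where F is the fixed field of σ². -/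
open Finset

/-- Cyclic Hilbert 90 via Dedekind independence of characters. -/
lemma hilbert90_cyclic {F L : Type*} [Field F] [Field L] [Algebra F L]
    [FiniteDimensional F L] [IsGalois F L] (τ : L ≃ₐ[F] L)
    (hτ : ∀ g : L ≃ₐ[F] L, g ∈ Subgroup.zpowers τ) (η : L)
    (hη : Algebra.norm F η = 1) : ∃ ε : L, ε ≠ 0 ∧ η = ε / τ ε := by
  classical
  have hη0 : η ≠ 0 := by
    intro h
    rw [h, Algebra.norm_zero] at hη
    exact zero_ne_one hη
  set m := orderOf τ with hm
  -- every automorphism is τ^i for some i < m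
  have hmpos : 0 < m := orderOf_pos τ
  -- the coefficients
  set c : ℕ → L := fun i => ∏ j ∈ range i, (τ ^ j) η with hc
  have hc0 : c 0 = 1 := by simp [hc]
  have hcne : ∀ i, c i ≠ 0 := fun i =>
    prod_ne_zero_iff.2 fun j _ => by
      simpa using (map_ne_zero (τ ^ j : L ≃ₐ[F] L).toRingEquiv.toRingHom).2 hη0
  have hcsucc : ∀ i, c (i + 1) = η * τ (c i) := by
    intro i
    show (∏ j ∈ range (i + 1), (τ ^ j) η) = η * τ (∏ j ∈ range i, (τ ^ j) η)
    have hstep : ∀ j, τ ((τ ^ j) η) = (τ ^ (j + 1)) η := fun j => by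
      rw [pow_succ']; rfl
    rw [Finset.prod_range_succ', map_prod]
    simp only [hstep, pow_zero, AlgEquiv.one_apply]
    exact mul_comm _ _
  -- τ^i, i < m, are linearly independent as functions L → L
  have hinj : Function.Injective fun i : Fin m => ((τ ^ (i : ℕ) : L ≃ₐ[F] L) : L →* L) := by
    intro i j hij
    have : (τ ^ (i : ℕ) : L ≃ₐ[F] L) = τ ^ (j : ℕ) := by
      ext x; exact DFunLike.congr_fun hij x
    have := pow_injOn_Iio_orderOf (x := τ) (Set.mem_Iio.2 i.2) (Set.mem_Iio.2 j.2) this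
    exact Fin.ext this
  have hli : LinearIndependent L fun i : Fin m => ((τ ^ (i : ℕ) : L ≃ₐ[F] L) : L → L) := by
    have h1 : LinearIndependent L (fun f : L →* L => (f : L → L)) :=
      linearIndependent_monoidHom L L
    have := h1.comp (fun i : Fin m => ((τ ^ (i : ℕ) : L ≃ₐ[F] L) : L →* L)) hinj
    exact this
  -- get z with ε ≠ 0
  have hne : (fun z => ∑ i : Fin m, c i * (τ ^ (i : ℕ)) z) ≠ 0 := by
    intro h
    have := Fintype.linearIndependent_iff.1 hli (fun i => c i) ?_ ⟨0, hmpos⟩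
    · exact hcne 0 (by simpa [hc0] using this)
    · funext z
      have := congr_fun h z
      simpa [smul_eq_mul] using this
  obtain ⟨z, hz⟩ : ∃ z, ∑ i : Fin m, c i * (τ ^ (i : ℕ)) z ≠ 0 := by
    by_contra h
    push_neg at h
    exact hne (funext h)
  set ε : L := ∑ i : Fin m, c i * (τ ^ (i : ℕ)) z with hε
  -- rewrite as sum over range m
  have hεr : ε = ∑ i ∈ range m, c i * (τ ^ i) z := by
    rw [hε, Finset.sum_range fun i => c i * (τ ^ i) z]
  -- c m = 1
  have hcm : c m = 1 := by
    have hbij : Function.Bijective fun i : Fin m => (τ ^ (i : ℕ) : L ≃ₐ[F] L) := by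
      refine (Fintype.bijective_iff_injective_and_card _).2 ⟨?_, ?_⟩
      · intro i j hij
        exact Fin.ext (pow_injOn_Iio_orderOf (x := τ) (Set.mem_Iio.2 i.2) (Set.mem_Iio.2 j.2) hij)
      · rw [Fintype.card_fin]
        have : (Subgroup.zpowers τ : Subgroup (L ≃ₐ[F] L)) = ⊤ :=
          (Subgroup.eq_top_iff' _).2 hτ
        calc m = Fintype.card (Subgroup.zpowers τ) := (Fintype.card_zpowers).symm
          _ = Fintype.card (L ≃ₐ[F] L) := Fintype.card_congr (Equiv.subtypeUnivEquiv hτ)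
    have := Algebra.norm_eq_prod_automorphisms F η (L := L)
    rw [hη, map_one] at this
    have h2 : ∏ g : L ≃ₐ[F] L, g η = ∏ i : Fin m, (τ ^ (i : ℕ)) η :=
      (Fintype.prod_bijective _ hbij _ _ fun i => rfl).symm
    rw [h2, ← Finset.prod_range fun i => (τ ^ i) η] at this
    exact this.symm
  have hτm : (τ ^ m : L ≃ₐ[F] L) = 1 := pow_orderOf_eq_one τ
  -- key identity: η * τ ε = ε
  have hkey : η * τ ε = ε := by
    have h1 : η * τ ε = ∑ i ∈ range m, c (i + 1) * (τ ^ (i + 1)) z := by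
      rw [hεr, map_sum, Finset.mul_sum]
      apply Finset.sum_congr rfl
      intro i _
      rw [map_mul, ← mul_assoc, ← hcsucc i, pow_succ']
      rfl
    have g0m : c m * (τ ^ m) z = c 0 * (τ ^ 0) z := by
      rw [hcm, hc0, hτm, pow_zero]
    calc η * τ ε = ∑ i ∈ range m, c (i + 1) * (τ ^ (i + 1)) z := h1
      _ = ∑ i ∈ range (m + 1), c i * (τ ^ i) z - c 0 * (τ ^ 0) z := by
          rw [Finset.sum_range_succ' (fun i => c i * (τ ^ i) z) m]; ring
      _ = ∑ i ∈ range m, c i * (τ ^ i) z + c m * (τ ^ m) z - c 0 * (τ ^ 0) z := by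
          rw [Finset.sum_range_succ]
      _ = ∑ i ∈ range m, c i * (τ ^ i) z := by rw [g0m]; ring
      _ = ε := hεr.symm
  refine ⟨ε, hz, ?_⟩
  have hτε : τ ε ≠ 0 := (map_ne_zero τ.toRingEquiv.toRingHom).2 hz
  field_simp
  linear_combination hkey

/-- For `b ∈ L` nonzero and `σ ∈ Gal(L/K)`, the symmetric bilinear form
`φ_{b,σ}(x,y) = Tr_{L/K}(b·(x·σ(y) + σ(x)·y))` is degenerate if and only if there exists a
nonzero `c ∈ L` with `−σ(b)·b⁻¹ = σ²(c)·c⁻¹`; equivalently, if and only if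
`N_{L/F}(−σ(b)/b) = 1` where `F` is the fixed field of `σ²`. -/
theorem degenerate_iff (K L : Type*) [Field K] [Field L] [Algebra K L]
    [FiniteDimensional K L] [IsGalois K L] (h2 : (2 : K) ≠ 0)
    (b : L) (hb : b ≠ 0) (σ : L ≃ₐ[K] L) :
    ((∃ x : L, x ≠ 0 ∧ ∀ y : L, Algebra.trace K L (b * (x * σ y + σ x * y)) = 0) ↔
       ∃ c : L, c ≠ 0 ∧ -(σ b) * b⁻¹ = σ (σ c) * c⁻¹) ∧
    ((∃ x : L, x ≠ 0 ∧ ∀ y : L, Algebra.trace K L (b * (x * σ y + σ x * y)) = 0) ↔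
       Algebra.norm (↥(IntermediateField.fixedField (Subgroup.zpowers (σ ^ 2))))
         (-(σ b) / b) = 1) := by
  classical
  set F := IntermediateField.fixedField (Subgroup.zpowers (σ ^ 2)) with hF
  have hsb : σ b ≠ 0 := fun h => hb (σ.injective (h.trans (map_zero σ).symm))
  -- the trace identity
  have hco : ∀ x y : L, Algebra.trace K L (b * (x * σ y + σ x * y)) =
      Algebra.trace K L ((σ.symm b * σ.symm x + b * σ x) * y) := by
    intro x y
    have h1 : Algebra.trace K L (b * (x * σ y)) =
        Algebra.trace K L (σ.symm b * σ.symm x * y) := by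
      conv_lhs => rw [← Algebra.trace_eq_of_algEquiv σ.symm (b * (x * σ y))]
      congr 1
      rw [map_mul, map_mul, AlgEquiv.symm_apply_apply]
      ring
    rw [mul_add, map_add, add_mul, map_add, h1]
    congr 2
    ring
  -- radical condition
  have hrad : ∀ x : L, (∀ y : L, Algebra.trace K L (b * (x * σ y + σ x * y)) = 0) ↔
      σ.symm b * σ.symm x + b * σ x = 0 := by
    intro x
    constructor
    · intro h
      apply (traceForm_nondegenerate K L).1 _
      intro y
      rw [Algebra.traceForm_apply, ← hco x y]
      exact h y
    · intro hw y
      rw [hco x y, hw, zero_mul, map_zero]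
  -- first equivalence
  have hiff1 : (∃ x : L, x ≠ 0 ∧ ∀ y : L, Algebra.trace K L (b * (x * σ y + σ x * y)) = 0) ↔
      ∃ c : L, c ≠ 0 ∧ -(σ b) * b⁻¹ = σ (σ c) * c⁻¹ := by
    constructor
    · rintro ⟨x, hx, hxy⟩
      have hxe := (hrad x).mp hxy
      refine ⟨x⁻¹, inv_ne_zero hx, ?_⟩
      have h1 : b * x + σ b * σ (σ x) = 0 := by
        have := congrArg σ hxe
        rwa [map_add, map_mul, map_mul, AlgEquiv.apply_symm_apply,
          AlgEquiv.apply_symm_apply, map_zero] at this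
      have hσx : σ x ≠ 0 := fun h => hx (σ.injective (h.trans (map_zero σ).symm))
      have hσ2x : σ (σ x) ≠ 0 := fun h => hσx (σ.injective (h.trans (map_zero σ).symm))
      rw [map_inv₀, map_inv₀, inv_inv]
      field_simp
      linear_combination -h1
    · rintro ⟨c, hc, hce⟩
      have hσc : σ c ≠ 0 := fun h => hc (σ.injective (h.trans (map_zero σ).symm))
      have hσ2c : σ (σ c) ≠ 0 := fun h => hσc (σ.injective (h.trans (map_zero σ).symm))
      refine ⟨c⁻¹, inv_ne_zero hc, (hrad _).mpr ?_⟩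
      have h1 : σ b * σ (σ c⁻¹) + b * c⁻¹ = 0 := by
        rw [map_inv₀, map_inv₀]
        field_simp at hce ⊢
        linear_combination -hce
      have := congrArg σ.symm h1
      rwa [map_add, map_mul, map_mul, AlgEquiv.symm_apply_apply,
        AlgEquiv.symm_apply_apply, map_zero, add_comm] at this
  -- set up the Galois group of L/F
  have hfix : IntermediateField.fixingSubgroup F = Subgroup.zpowers (σ ^ 2) :=
    IntermediateField.fixingSubgroup_fixedField _
  have hmem : σ ^ 2 ∈ IntermediateField.fixingSubgroup F := by
    rw [hfix]; exact Subgroup.mem_zpowers _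
  set τ : L ≃ₐ[↥F] L := IntermediateField.fixingSubgroupEquiv F ⟨σ ^ 2, hmem⟩ with hτ
  have hτapp : ∀ z : L, τ z = σ (σ z) := by
    intro z
    show (σ ^ 2) z = σ (σ z)
    rw [pow_two]
    rfl
  have hτgen : ∀ g : L ≃ₐ[↥F] L, g ∈ Subgroup.zpowers τ := by
    intro g
    set s := (IntermediateField.fixingSubgroupEquiv F).symm g with hs
    have hsH : (s : L ≃ₐ[K] L) ∈ Subgroup.zpowers (σ ^ 2) := hfix ▸ s.2
    obtain ⟨k, hk⟩ := Subgroup.mem_zpowers_iff.mp hsH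
    have hsk : s = (⟨σ ^ 2, hmem⟩ : IntermediateField.fixingSubgroup F) ^ k := by
      apply Subtype.ext
      rw [SubgroupClass.coe_zpow]
      exact hk.symm
    refine Subgroup.mem_zpowers_iff.mpr ⟨k, ?_⟩
    rw [hτ, ← map_zpow, ← hsk, hs,
      (IntermediateField.fixingSubgroupEquiv F).apply_symm_apply g]
  -- second equivalence
  have hiff2 : (∃ c : L, c ≠ 0 ∧ -(σ b) * b⁻¹ = σ (σ c) * c⁻¹) ↔
      Algebra.norm (↥F) (-(σ b) / b) = 1 := by
    constructor
    · rintro ⟨c, hc, hce⟩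
      apply (algebraMap (↥F) L).injective
      rw [map_one, Algebra.norm_eq_prod_automorphisms]
      have hη : -(σ b) / b = τ c * c⁻¹ := by rw [div_eq_mul_inv, hce, hτapp]
      have hprodne : (∏ g : L ≃ₐ[↥F] L, g c) ≠ 0 :=
        Finset.prod_ne_zero_iff.2 fun g _ => fun h => hc (g.injective (h.trans (map_zero g).symm))
      calc ∏ g : L ≃ₐ[↥F] L, g (-(σ b) / b)
          = ∏ g : L ≃ₐ[↥F] L, (g (τ c) * (g c)⁻¹) := by
            refine Finset.prod_congr rfl fun g _ => ?_
            rw [hη, map_mul, map_inv₀]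
        _ = (∏ g : L ≃ₐ[↥F] L, g (τ c)) * (∏ g : L ≃ₐ[↥F] L, (g c)⁻¹) :=
            Finset.prod_mul_distrib
        _ = (∏ g : L ≃ₐ[↥F] L, g c) * (∏ g : L ≃ₐ[↥F] L, g c)⁻¹ := by
            rw [← Finset.prod_inv_distrib]
            congr 1
            exact Fintype.prod_bijective (· * τ) (Group.mulRight_bijective τ)
              _ _ (fun g => rfl)
        _ = 1 := mul_inv_cancel₀ hprodne
    · intro hN
      obtain ⟨ε, hε, hεe⟩ := hilbert90_cyclic τ hτgen (-(σ b) / b) hN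
      have hτε : τ ε ≠ 0 := fun h => hε (τ.injective (h.trans (map_zero τ).symm))
      refine ⟨ε⁻¹, inv_ne_zero hε, ?_⟩
      have h3 : σ (σ ε⁻¹) = (τ ε)⁻¹ := by rw [← hτapp, map_inv₀]
      rw [div_eq_mul_inv, div_eq_mul_inv] at hεe
      rw [h3, inv_inv, hεe, mul_comm]
  exact ⟨hiff1, hiff1.trans hiff2⟩
end

section
/- Let b ∈ L be nonzero and σ ∈ G, and suppose φ_{b,σ} is degenerate, with nonzero c ∈ L satisfying −σ(b)·b⁻¹ = σ²(c)·c⁻¹. Then the radical of φ_{b,σ} equals c⁻¹·F, where F is the fixed field of σ², and hence the radical has K-dimension n/[L:F]; consequently the rank of φ_{b,σ} equals n − n/[L:F]. -/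
open Module

/-- The symmetric `K`-bilinear form `φ_{b,σ}(x,y) = Tr_{L/K}(b·(x·σ(y) + σ(x)·y))`
on `L`, viewed as a bilinear form `L →ₗ[K] L →ₗ[K] K`.  (Note that
`Tr(b·(x·σ(y) + σ(x)·y)) = Tr((b·x)·σ(y)) + Tr((b·σ(x))·y)`.) -/
noncomputable def phi (K L : Type*) [Field K] [Field L] [Algebra K L]
    (b : L) (σ : L ≃ₐ[K] L) : LinearMap.BilinForm K L :=
  (Algebra.traceForm K L).compl₁₂ (LinearMap.mulLeft K b) σ.toLinearMap +
    (Algebra.traceForm K L).compl₁₂ ((LinearMap.mulLeft K b).comp σ.toLinearMap) LinearMap.id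

/-- Let `b ∈ L` be nonzero and `σ ∈ Gal(L/K)`, and suppose `φ_{b,σ}` is
degenerate, with nonzero `c ∈ L` satisfying `−σ(b)·b⁻¹ = σ²(c)·c⁻¹`.  Then the radical of
`φ_{b,σ}` equals `c⁻¹·F`, where `F` is the fixed field of `σ²`; hence the radical has
`K`-dimension `n/[L:F]` and the rank of `φ_{b,σ}` equals `n − n/[L:F]` (with `n = [L:K]`). -/
theorem radical_eq_of_degenerate (K L : Type*) [Field K] [Field L] [Algebra K L]
    [FiniteDimensional K L] [IsGalois K L] (h2 : (2 : K) ≠ 0)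
    (b : L) (hb : b ≠ 0) (σ : L ≃ₐ[K] L) (c : L) (hc : c ≠ 0)
    (hrel : -(σ b) * b⁻¹ = σ (σ c) * c⁻¹)
    (F : IntermediateField K L)
    (hF : F = IntermediateField.fixedField (Subgroup.zpowers (σ ^ 2))) :
    (LinearMap.ker (phi K L b σ) : Set L) = Set.range (fun f : F => c⁻¹ * (f : L)) ∧
    finrank K (LinearMap.ker (phi K L b σ)) = finrank K L / finrank F L ∧
    finrank K L - finrank K (LinearMap.ker (phi K L b σ)) =
      finrank K L - finrank K L / finrank F L := by
  -- membership in F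
  have hmemF : ∀ x : L, x ∈ F ↔ σ (σ x) = x := by
    intro x
    rw [hF]
    constructor
    · intro hx
      have := hx ⟨σ ^ 2, Subgroup.mem_zpowers _⟩
      simpa [pow_two, AlgEquiv.mul_apply] using this
    · intro hx g
      have hstab : σ ^ 2 ∈ MulAction.stabilizer (L ≃ₐ[K] L) x := by
        simpa [pow_two, AlgEquiv.mul_apply, AlgEquiv.smul_def] using hx
      exact (Subgroup.zpowers_le.mpr hstab) g.2
  -- rewrite phi
  have hphi : ∀ x y : L, phi K L b σ x y =
      Algebra.trace K L ((b * x + σ b * σ (σ x)) * σ y) := by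
    intro x y
    simp [phi, Algebra.traceForm_apply, add_mul]
    rw [← Algebra.trace_eq_of_algEquiv σ (b * σ x * y)]
    ring_nf
    simp [mul_comm, mul_assoc, mul_left_comm]
  have hnd := traceForm_nondegenerate K L
  have hrel2 : -(σ b) * c = σ (σ c) * b := by
    field_simp at hrel
    linear_combination hrel
  -- kernel characterization
  have hker : ∀ x : L, x ∈ LinearMap.ker (phi K L b σ) ↔ c * x ∈ F := by
    intro x
    rw [LinearMap.mem_ker, LinearMap.ext_iff]
    have he : (∀ y, phi K L b σ x y = 0) ↔ b * x + σ b * σ (σ x) = 0 := by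
      constructor
      · intro h
        apply hnd.1
        intro y
        have := h (σ.symm y)
        rw [hphi] at this
        simpa only [Algebra.traceForm_apply, AlgEquiv.apply_symm_apply] using this
      · intro h y
        rw [hphi, h, zero_mul, map_zero]
    simp only [LinearMap.zero_apply]
    rw [he, hmemF]
    simp only [map_mul]
    constructor
    · intro h
      have h2 : c * (b * x + σ b * σ (σ x)) = 0 := by rw [h, mul_zero]
      have h3 : b * (c * x - σ (σ c) * σ (σ x)) = 0 := by
        linear_combination h2 + σ (σ x) * hrel2
      have := mul_eq_zero.mp h3
      rcases this with h4 | h4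
      · exact absurd h4 hb
      · linear_combination -h4
    · intro h
      have h3 : c * (b * x + σ b * σ (σ x)) = 0 := by
        linear_combination (-b) * h - σ (σ x) * hrel2
      rcases mul_eq_zero.mp h3 with h4 | h4
      · exact absurd h4 hc
      · exact h4
  -- set equality
  have hset : (LinearMap.ker (phi K L b σ) : Set L) =
      Set.range (fun f : F => c⁻¹ * (f : L)) := by
    ext x
    simp only [SetLike.mem_coe, hker, Set.mem_range]
    constructor
    · intro h
      exact ⟨⟨c * x, h⟩, by field_simp⟩
    · rintro ⟨f, rfl⟩
      have : c * (c⁻¹ * (f : L)) = (f : L) := by field_simp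
      rw [this]
      exact f.2
  have hdim : finrank K (LinearMap.ker (phi K L b σ)) = finrank K L / finrank F L := by
    have hsub : LinearMap.ker (phi K L b σ) =
        Submodule.map (LinearMap.mulLeft K c⁻¹) (Subalgebra.toSubmodule F.toSubalgebra) := by
      apply le_antisymm
      · intro x hx
        exact ⟨c * x, (hker x).mp hx, by simp [LinearMap.mulLeft_apply]; field_simp⟩
      · rintro x ⟨f, hf, rfl⟩
        rw [hker]
        simp only [LinearMap.mulLeft_apply]
        have : c * (c⁻¹ * f) = f := by field_simp
        rw [this]
        exact hf
    have hinj : Function.Injective (LinearMap.mulLeft K c⁻¹) := by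
      intro a a' h
      simpa [LinearMap.mulLeft_apply] using
        mul_left_cancel₀ (inv_ne_zero hc) h
    have e1 := (Submodule.equivMapOfInjective (LinearMap.mulLeft K c⁻¹) hinj
      (Subalgebra.toSubmodule F.toSubalgebra)).symm
    have hdim1 : finrank K (LinearMap.ker (phi K L b σ)) = finrank K F := by
      rw [hsub]
      exact e1.finrank_eq
    have hFL : FiniteDimensional F L := FiniteDimensional.right K F L
    have hpos : 0 < finrank F L := finrank_pos
    have htower : finrank K F * finrank F L = finrank K L := Module.finrank_mul_finrank K F L
    rw [hdim1, ← htower, Nat.mul_div_cancel _ hpos]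
  exact ⟨hset, hdim, by rw [hdim]⟩
end

section
/- If σ ∈ G has odd order, then for every nonzero b ∈ L the symmetric bilinear form φ_{b,σ} is nondegenerate. -/
/-- If `σ ∈ Gal(L/K)` has odd order, then for every nonzero `b ∈ L` the
symmetric bilinear form `φ_{b,σ}(x,y) = Tr_{L/K}(b·(x·σ(y) + σ(x)·y))` is nondegenerate,
i.e. its radical is `{0}`. -/
theorem nondegenerate_of_odd_order (K L : Type*) [Field K] [Field L] [Algebra K L]
    [FiniteDimensional K L] [IsGalois K L] (h2 : (2 : K) ≠ 0)
    (σ : L ≃ₐ[K] L) (hodd : Odd (orderOf σ)) (b : L) (hb : b ≠ 0) :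
    ∀ x : L, (∀ y : L, Algebra.trace K L (b * (x * σ y + σ x * y)) = 0) → x = 0 := by
  intro x hx
  by_contra hx0
  set n := orderOf σ with hn
  -- the key relation: σ⁻¹(b*x) + b*σ(x) = 0
  have key : σ.symm (b * x) + b * σ x = 0 := by
    have hnd := traceForm_nondegenerate K L
    apply hnd.1
    intro y
    have h1 : Algebra.trace K L (b * x * σ y) = Algebra.trace K L (σ.symm (b * x) * y) := by
      conv_lhs => rw [show b * x * σ y = σ (σ.symm (b * x) * y) by
        rw [map_mul]; simp]
      exact Algebra.trace_eq_of_algEquiv σ _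
    have h2' := hx y
    rw [mul_add] at h2'
    rw [map_add] at h2'
    simp only [Algebra.traceForm_apply, add_mul]
    rw [map_add, ← h1]
    rw [show b * (x * σ y) = b * x * σ y by ring, show b * (σ x * y) = b * σ x * y by ring] at h2'
    linear_combination h2'
  -- so σ⁻¹(b*x) = -(b * σ x)
  have key2 : b * x = σ (-(b * σ x)) := by
    rw [← eq_neg_of_add_eq_zero_left key, AlgEquiv.apply_symm_apply]
  -- define the orbit product
  set P : L → L := fun z => ∏ k ∈ Finset.range n, (σ ^ k) z with hP
  have hPmul : ∀ a c : L, P (a * c) = P a * P c := by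
    intro a c
    simp only [hP, map_mul, Finset.prod_mul_distrib]
  have hPneg : ∀ a : L, P (-a) = - P a := by
    intro a
    have hneg : ∀ k ∈ Finset.range n, (σ ^ k) (-a) = (-1) * (σ ^ k) a := by
      intro k _; rw [map_neg, neg_one_mul]
    simp only [hP]
    rw [Finset.prod_congr rfl hneg, Finset.prod_mul_distrib, Finset.prod_const,
      Finset.card_range, hodd.neg_one_pow, neg_one_mul]
  have hnpos : n ≠ 0 := by
    rintro h; rw [h] at hodd; simp [Nat.odd_iff] at hodd
  obtain ⟨m, hm⟩ : ∃ m, n = m + 1 := ⟨n - 1, (Nat.succ_pred_eq_of_ne_zero hnpos).symm⟩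
  have horder : σ ^ n = 1 := by rw [hn]; exact pow_orderOf_eq_one σ
  have hPshift : ∀ a : L, P (σ a) = P a := by
    intro a
    have hf : ∀ k, (σ ^ k) (σ a) = (σ ^ (k+1)) a := by
      intro k; rw [pow_succ]; rfl
    have hfn : (σ ^ (m+1)) a = (σ ^ 0) a := by
      rw [← hm, horder, pow_zero]
    simp only [hP]
    rw [Finset.prod_congr rfl (fun k _ => hf k), hm, Finset.prod_range_succ, hfn,
      Finset.prod_range_succ' (fun k => (σ ^ k) a) m]
  -- apply P to key2
  have heq : P b * P x = -(P b * P x) := by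
    calc P b * P x = P (b * x) := (hPmul b x).symm
      _ = P (σ (-(b * σ x))) := by rw [key2]
      _ = P (-(b * σ x)) := hPshift _
      _ = -(P b * P (σ x)) := by rw [hPneg, hPmul]
      _ = -(P b * P x) := by rw [hPshift]
  have h2L : (2 : L) ≠ 0 := by
    intro h
    apply h2
    have : (algebraMap K L) 2 = 0 := by rw [map_ofNat]; exact_mod_cast h
    exact (map_eq_zero_iff _ (algebraMap K L).injective).mp this
  have hzero : P b * P x = 0 := by
    have : 2 * (P b * P x) = 0 := by linear_combination heq
    exact (mul_eq_zero.mp this).resolve_left h2L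
  have hPb : P b ≠ 0 := by
    simp only [hP]
    rw [Finset.prod_ne_zero_iff]
    intro k _
    exact (map_ne_zero_iff _ (σ ^ k).injective).mpr hb
  have hPx : P x ≠ 0 := by
    simp only [hP]
    rw [Finset.prod_ne_zero_iff]
    intro k _
    exact (map_ne_zero_iff _ (σ ^ k).injective).mpr hx0
  exact (mul_ne_zero hPb hPx) hzero
end

section
/- If σ ∈ G has even order 2r, then there exist nonzero elements b, b' ∈ L such that φ_{b,σ} is degenerate and φ_{b',σ} is nondegenerate. -/
set_option linter.unusedSectionVars false

open Finset
open scoped IntermediateField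

section Helpers

variable {K L : Type*} [Field K] [Field L] [Algebra K L] [FiniteDimensional K L] [IsGalois K L]

private lemma traceInv (e : L ≃ₐ[K] L) (z : L) :
    Algebra.trace K L (e z) = Algebra.trace K L z := by
  have h : ∑ τ : L ≃ₐ[K] L, τ (e z) = ∑ τ : L ≃ₐ[K] L, τ z :=
    Fintype.sum_bijective (fun τ => τ * e) (Group.mulRight_bijective e)
      (fun τ => τ (e z)) (fun τ => τ z) (fun τ => (AlgEquiv.mul_apply τ e z).symm)
  apply (algebraMap K L).injective
  rw [trace_eq_sum_automorphisms, trace_eq_sum_automorphisms, h]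

private lemma traceKill (c : L) (h : ∀ y, Algebra.trace K L (c * y) = 0) : c = 0 :=
  (traceForm_nondegenerate K L).1 c fun y => by
    rw [Algebra.traceForm_apply]; exact h y

private lemma dedekind {n : ℕ} (e : ℕ → (L ≃ₐ[K] L))
    (he : ∀ i < n, ∀ j < n, e i = e j → i = j) (c : ℕ → L) {i0 : ℕ} (hi0 : i0 < n)
    (hc : c i0 ≠ 0) : ∃ z : L, ∑ i ∈ range n, c i * (e i) z ≠ 0 := by
  by_contra hall
  push_neg at hall
  have hli : LinearIndependent L (fun (f : L ≃ₐ[K] L) => (f : L → L)) :=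
    LinearIndependent.comp (ι' := L ≃ₐ[K] L) (linearIndependent_monoidHom L L) (fun f => f)
      (fun x y h => by ext a; exact DFunLike.ext_iff.1 h a)
  have hli2 : LinearIndependent L (fun (i : Fin n) => ((e i) : L → L)) :=
    hli.comp (fun i : Fin n => e i) (fun i j hij => Fin.ext (he i i.2 j j.2 hij))
  have hzero : ∑ i : Fin n, c i • ((e i) : L → L) = 0 := by
    funext z
    have h1 : (∑ i : Fin n, c i • ((e i) : L → L)) z
        = ∑ i : Fin n, c i * (e i) z := by
      simp [Finset.sum_apply, smul_eq_mul]
    rw [h1, Fin.sum_univ_eq_sum_range (fun i => c i * (e i) z) n]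
    exact hall z
  have := Fintype.linearIndependent_iff.mp hli2 (fun i => c i) hzero ⟨i0, hi0⟩
  exact hc this

variable (σ : L ≃ₐ[K] L) (r : ℕ)

private lemma distinctPow {N : ℕ} (hord : orderOf σ = N) :
    ∀ i < N, ∀ j < N, σ ^ i = σ ^ j → i = j := by
  intro i hi j hj hij
  exact pow_injOn_Iio_orderOf (by rw [hord]; exact hi) (by rw [hord]; exact hj) hij

private lemma distinct2 (hord : orderOf σ = 2 * r) :
    ∀ i < r, ∀ j < r, σ ^ (2 * i) = σ ^ (2 * j) → i = j := by
  intro i hi j hj hij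
  have := distinctPow σ hord (2 * i) (by omega) (2 * j) (by omega) hij
  omega

private lemma fixPow {τ : L ≃ₐ[K] L} {z : L} (h : τ z = z) : ∀ n : ℕ, (τ ^ n) z = z := by
  intro n
  induction n with
  | zero => exact AlgEquiv.one_apply z
  | succ n ih => rw [pow_succ, AlgEquiv.mul_apply, h, ih]

private lemma pow_two_apply (b : L) : (σ ^ 2) b = σ (σ b) := by
  rw [pow_two, AlgEquiv.mul_apply]

private lemma shift2a (m : ℕ) (z : L) : σ (σ ((σ ^ m) z)) = (σ ^ (m + 2)) z := by
  have h : σ ^ (m + 2) = σ ^ 2 * σ ^ m := by rw [← pow_add]; congr 1; omega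
  rw [h, AlgEquiv.mul_apply, pow_two_apply]

private lemma shift2b (m : ℕ) (z : L) : (σ ^ m) (σ (σ z)) = (σ ^ (m + 2)) z := by
  rw [← pow_two_apply, ← AlgEquiv.mul_apply, ← pow_add]

private lemma exists_skew (hr : 1 ≤ r) (hord : orderOf σ = 2 * r) :
    ∃ b : L, b ≠ 0 ∧ σ b = -b := by
  obtain ⟨z, hz⟩ := dedekind (n := 2 * r) (fun k => σ ^ k) (distinctPow σ hord)
    (fun k => (-1 : L) ^ k) (i0 := 0) (by omega) (by norm_num)
  set g : ℕ → L := fun k => (-1 : L) ^ k * (σ ^ k) z with hg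
  refine ⟨∑ k ∈ range (2 * r), g k, hz, ?_⟩
  have h2r : σ ^ (2 * r) = 1 := by rw [← hord]; exact pow_orderOf_eq_one σ
  have hgN : g (2 * r) = g 0 := by
    simp only [hg, h2r, pow_zero, AlgEquiv.one_apply]
    rw [Even.neg_one_pow ⟨r, by ring⟩]
  have hshift : ∑ k ∈ range (2 * r), g (k + 1) = ∑ k ∈ range (2 * r), g k := by
    have h1 := Finset.sum_range_succ' g (2 * r)
    have h2 := Finset.sum_range_succ g (2 * r)
    rw [hgN] at h2
    exact add_right_cancel (h1.symm.trans h2)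
  have hσg : ∀ k, σ (g k) = -g (k + 1) := by
    intro k
    simp only [hg]
    rw [map_mul, map_pow, map_neg, map_one, pow_succ' σ k, AlgEquiv.mul_apply]
    ring
  rw [map_sum]
  calc ∑ k ∈ range (2 * r), σ (g k) = ∑ k ∈ range (2 * r), -g (k + 1) :=
        Finset.sum_congr rfl fun k _ => hσg k
    _ = -∑ k ∈ range (2 * r), g (k + 1) := by rw [Finset.sum_neg_distrib]
    _ = -∑ k ∈ range (2 * r), g k := by rw [hshift]

private lemma radical_rel (b x : L) (h : ∀ y, Algebra.trace K L (b * (x * σ y + σ x * y)) = 0) :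
    b * x + σ b * σ (σ x) = 0 := by
  have key : σ.symm (b * x) + b * σ x = 0 := by
    apply traceKill (K := K)
    intro y
    have h1 : Algebra.trace K L (b * (x * σ y)) = Algebra.trace K L (σ.symm (b * x) * y) := by
      conv_lhs => rw [show b * (x * σ y) = σ (σ.symm (b * x) * y) by
        rw [map_mul, AlgEquiv.apply_symm_apply]; ring]
      exact traceInv σ _
    have h2 : (σ.symm (b * x) + b * σ x) * y = σ.symm (b * x) * y + b * (σ x * y) := by ring
    rw [h2, map_add, ← h1, ← map_add]
    rw [show b * (x * σ y) + b * (σ x * y) = b * (x * σ y + σ x * y) by ring]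
    exact h y
  have := congrArg σ key
  rwa [map_add, AlgEquiv.apply_symm_apply, map_mul, map_zero] at this

private def Pf (b : L) : L := ∏ k ∈ range r, (σ ^ (2 * k)) b

private lemma Pf_one : Pf σ r (1 : L) = 1 := by simp [Pf]

private lemma Pf_zero (hr : 1 ≤ r) : Pf σ r (0 : L) = 0 :=
  Finset.prod_eq_zero (Finset.mem_range.mpr (by omega : 0 < r)) (map_zero _)

private lemma Pf_mul (a b : L) : Pf σ r (a * b) = Pf σ r a * Pf σ r b := by
  simp [Pf, map_mul, Finset.prod_mul_distrib]

private lemma Pf_ne_zero {b : L} (hb : b ≠ 0) : Pf σ r b ≠ 0 :=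
  Finset.prod_ne_zero_iff.mpr fun k _ => fun h0 =>
    hb (by simpa only [AlgEquiv.symm_apply_apply, map_zero] using congrArg (σ ^ (2 * k)).symm h0)

private lemma sigma_Pf (b : L) : σ (Pf σ r b) = ∏ k ∈ range r, (σ ^ (2 * k + 1)) b := by
  rw [Pf, map_prod]
  exact Finset.prod_congr rfl fun k _ => by rw [← AlgEquiv.mul_apply, ← pow_succ']

private lemma sigma_Pf' (b : L) : σ (Pf σ r b) = ∏ k ∈ range r, (σ ^ (2 * k)) (σ b) := by
  rw [sigma_Pf]
  exact Finset.prod_congr rfl fun k _ => by rw [pow_succ, AlgEquiv.mul_apply]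

private lemma Pf_sigma_sq (hr : 1 ≤ r) (h2r : σ ^ (2 * r) = 1) (b : L) :
    Pf σ r (σ (σ b)) = Pf σ r b := by
  set g : ℕ → L := fun k => (σ ^ (2 * k)) b with hg
  have hstep : ∀ k, (σ ^ (2 * k)) (σ (σ b)) = g (k + 1) := by
    intro k
    rw [hg]
    show (σ ^ (2 * k)) (σ (σ b)) = (σ ^ (2 * (k + 1))) b
    rw [show 2 * (k + 1) = 2 * k + 2 from by ring]
    exact shift2b σ (2 * k) b
  have hLHS : Pf σ r (σ (σ b)) = ∏ k ∈ range r, g (k + 1) :=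
    Finset.prod_congr rfl fun k _ => hstep k
  have hgr : g r = g 0 := by simp only [hg, h2r, Nat.mul_zero, pow_zero, AlgEquiv.one_apply]
  by_cases hb : b = 0
  · subst hb
    rw [map_zero, map_zero]
  · have h3 : (∏ k ∈ range r, g (k + 1)) * g 0 = (∏ k ∈ range r, g k) * g r :=
      (Finset.prod_range_succ' g r).symm.trans (Finset.prod_range_succ g r)
    rw [hgr] at h3
    have hg0 : g 0 ≠ 0 := by simpa [hg] using hb
    rw [hLHS]
    exact mul_right_cancel₀ hg0 h3

private lemma h90 (hr : 1 ≤ r) (hord : orderOf σ = 2 * r) (c : L) (hc : Pf σ r c = 1) :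
    ∃ β : L, β ≠ 0 ∧ c * σ (σ β) = β := by
  have h2r : σ ^ (2 * r) = 1 := by rw [← hord]; exact pow_orderOf_eq_one σ
  set cc : ℕ → L := fun i => ∏ j ∈ range i, (σ ^ (2 * j)) c with hcc
  obtain ⟨z, hz⟩ := dedekind (n := r) (fun i => σ ^ (2 * i)) (distinct2 σ r hord) cc
    (i0 := 0) (by omega) (by simp [hcc])
  set G : ℕ → L := fun i => cc i * (σ ^ (2 * i)) z with hG
  refine ⟨∑ i ∈ range r, G i, hz, ?_⟩
  have hccstep : ∀ i, c * σ (σ (cc i)) = cc (i + 1) := by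
    intro i
    have h1 : σ (σ (cc i)) = ∏ j ∈ range i, (σ ^ (2 * (j + 1))) c := by
      rw [hcc, map_prod, map_prod]
      exact Finset.prod_congr rfl fun j _ => by
        rw [show 2 * (j + 1) = 2 * j + 2 from by ring]
        exact shift2a σ (2 * j) c
    have h2 := Finset.prod_range_succ' (fun j => (σ ^ (2 * j)) c) i
    simp only [Nat.mul_zero, pow_zero, AlgEquiv.one_apply] at h2
    rw [h1]
    show c * ∏ j ∈ range i, (σ ^ (2 * (j + 1))) c = ∏ j ∈ range (i + 1), (σ ^ (2 * j)) c
    rw [h2, mul_comm]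
  have hstep : σ (σ (∑ i ∈ range r, G i))
      = ∑ i ∈ range r, σ (σ (cc i)) * (σ ^ (2 * (i + 1))) z := by
    rw [map_sum, map_sum]
    refine Finset.sum_congr rfl fun i _ => ?_
    show σ (σ (cc i * (σ ^ (2 * i)) z)) = σ (σ (cc i)) * (σ ^ (2 * (i + 1))) z
    rw [map_mul, map_mul, show 2 * (i + 1) = 2 * i + 2 from by ring, shift2a]
  rw [hstep, Finset.mul_sum]
  have hterm : ∀ i, c * (σ (σ (cc i)) * (σ ^ (2 * (i + 1))) z) = G (i + 1) := by
    intro i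
    rw [← mul_assoc, hccstep i]
  rw [Finset.sum_congr rfl fun i _ => hterm i]
  have hGr : G r = G 0 := by
    have hcr : (∏ j ∈ range r, (σ ^ (2 * j)) c) = 1 := hc
    simp only [hG, hcc, h2r, hcr, Nat.mul_zero, pow_zero, AlgEquiv.one_apply, Finset.range_zero,
      Finset.prod_empty, one_mul]
  have h1 := Finset.sum_range_succ' G r
  have h2 := Finset.sum_range_succ G r
  rw [hGr] at h2
  exact add_right_cancel (h1.symm.trans h2)

end Helpers
section Helpers2

variable {K L : Type*} [Field K] [Field L] [Algebra K L] [FiniteDimensional K L] [IsGalois K L]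
variable (σ : L ≃ₐ[K] L) (r : ℕ)

private lemma fixedField_zpowers_mem (τ : L ≃ₐ[K] L) (x : L) :
    x ∈ IntermediateField.fixedField (Subgroup.zpowers τ) ↔ τ x = x := by
  constructor
  · intro h
    exact h ⟨τ, Subgroup.mem_zpowers τ⟩
  · intro h g
    have hst : Subgroup.zpowers τ ≤ MulAction.stabilizer (L ≃ₐ[K] L) x :=
      Subgroup.zpowers_le.mpr h
    exact hst g.2

private def PMdef : L →* L where
  toFun := Pf σ r
  map_one' := Pf_one σ r
  map_mul' := Pf_mul σ r

private def S1def : L →* L where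
  toFun := fun x => σ x
  map_one' := map_one σ
  map_mul' := fun a b => map_mul σ a b

private def S2def : L →* L where
  toFun := fun x => σ (σ x)
  map_one' := by simp
  map_mul' := fun a b => by simp

private lemma finite_branch [Finite L] (hr : 1 ≤ r) (hord : orderOf σ = 2 * r)
    (H : ∀ b : L, σ (Pf σ r b) = Pf σ r b) : False := by
  have h2r : σ ^ (2 * r) = 1 := by rw [← hord]; exact pow_orderOf_eq_one σ
  classical
  let PM : L →* L := PMdef σ r
  let S1 : L →* L := S1def σ
  let S2 : L →* L := S2def σ
  let Pu : Lˣ →* Lˣ := Units.map PM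
  let ψ : Lˣ →* Lˣ := MonoidHom.id Lˣ / Units.map S2
  let φ1 : Lˣ →* Lˣ := MonoidHom.id Lˣ / Units.map S1
  have hψval : ∀ u : Lˣ, ((ψ u : L)) = (u : L) / σ (σ (u : L)) := by
    intro u
    show ((((MonoidHom.id Lˣ) u) / (Units.map S2 u) : Lˣ) : L) = _
    rw [Units.val_div_eq_div_val]
    rfl
  have hφ1val : ∀ u : Lˣ, ((φ1 u : L)) = (u : L) / σ (u : L) := by
    intro u
    show ((((MonoidHom.id Lˣ) u) / (Units.map S1 u) : Lˣ) : L) = _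
    rw [Units.val_div_eq_div_val]
    rfl
  have hPuval : ∀ u : Lˣ, ((Pu u : L)) = Pf σ r (u : L) := fun u => rfl
  have hσσne : ∀ {w : L}, w ≠ 0 → σ (σ w) ≠ 0 := by
    intro w hw h0
    exact hw (by simpa using congrArg (fun t => σ.symm (σ.symm t)) h0)
  have hrange : Pu.ker = ψ.range := by
    ext u
    constructor
    · intro hu
      have hu' : Pf σ r (u : L) = 1 := by
        have := congrArg (Units.val) (MonoidHom.mem_ker.mp hu)
        rw [hPuval] at this
        simpa using this
      obtain ⟨β, hβ, hβeq⟩ := h90 σ r hr hord (u : L) hu'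
      refine ⟨Units.mk0 β hβ, ?_⟩
      apply Units.ext
      rw [hψval]
      simp only [Units.val_mk0]
      rw [div_eq_iff (hσσne hβ)]
      exact hβeq.symm
    · rintro ⟨v, rfl⟩
      rw [MonoidHom.mem_ker]
      apply Units.ext
      rw [hPuval, hψval, Units.val_one]
      have hv : (v : L) ≠ 0 := Units.ne_zero v
      have hmul : Pf σ r ((v : L) / σ (σ (v : L))) * Pf σ r (σ (σ (v : L)))
          = Pf σ r (v : L) := by
        rw [← Pf_mul, div_mul_cancel₀ _ (hσσne hv)]
      rw [Pf_sigma_sq σ r hr h2r] at hmul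
      have hPv : Pf σ r (v : L) ≠ 0 := Pf_ne_zero σ r hv
      have : Pf σ r ((v : L) / σ (σ (v : L))) * Pf σ r (v : L) = 1 * Pf σ r (v : L) := by
        rw [one_mul, hmul]
      exact mul_right_cancel₀ hPv this
  -- counting
  have hcard1 : Nat.card Lˣ = Nat.card Pu.range * Nat.card Pu.ker := by
    rw [Subgroup.card_eq_card_quotient_mul_card_subgroup Pu.ker,
      Nat.card_congr (QuotientGroup.quotientKerEquivRange Pu).toEquiv]
  have hcard2 : Nat.card Lˣ = Nat.card ψ.range * Nat.card ψ.ker := by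
    rw [Subgroup.card_eq_card_quotient_mul_card_subgroup ψ.ker,
      Nat.card_congr (QuotientGroup.quotientKerEquivRange ψ).toEquiv]
  have hPr : Nat.card Pu.range = Nat.card ψ.ker := by
    have hpos : 0 < Nat.card ψ.range := Nat.card_pos
    apply Nat.eq_of_mul_eq_mul_right hpos
    calc Nat.card Pu.range * Nat.card ψ.range
        = Nat.card Pu.range * Nat.card Pu.ker := by rw [hrange]
      _ = Nat.card Lˣ := hcard1.symm
      _ = Nat.card ψ.range * Nat.card ψ.ker := hcard2
      _ = Nat.card ψ.ker * Nat.card ψ.range := mul_comm _ _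
  have hle1 : Pu.range ≤ φ1.ker := by
    rintro u ⟨v, rfl⟩
    rw [MonoidHom.mem_ker]
    apply Units.ext
    rw [hφ1val, hPuval, Units.val_one, H (v : L)]
    exact div_self (Pf_ne_zero σ r (Units.ne_zero v))
  have hle2 : φ1.ker ≤ ψ.ker := by
    intro u hu
    rw [MonoidHom.mem_ker] at hu ⊢
    have hu' : σ (u : L) = (u : L) := by
      have := congrArg Units.val hu
      rw [hφ1val, Units.val_one] at this
      have hune : (u : L) ≠ 0 := Units.ne_zero u
      field_simp at this
      exact this.symm
    apply Units.ext
    rw [hψval, Units.val_one, hu', hu']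
    exact div_self (Units.ne_zero u)
  have heq : φ1.ker = ψ.ker := by
    apply Subgroup.eq_of_le_of_card_ge hle2
    rw [← hPr]
    exact Subgroup.card_le_of_le hle1
  have hfix : ∀ x : L, σ (σ x) = x → σ x = x := by
    intro x hx
    by_cases hx0 : x = 0
    · rw [hx0, map_zero]
    · have hmem : Units.mk0 x hx0 ∈ ψ.ker := by
        rw [MonoidHom.mem_ker]
        apply Units.ext
        rw [hψval, Units.val_one, Units.val_mk0, hx]
        exact div_self hx0
      rw [← heq, MonoidHom.mem_ker] at hmem
      have hval := congrArg Units.val hmem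
      rw [hφ1val, Units.val_one, Units.val_mk0] at hval
      have hσxne : σ x ≠ 0 := by
        intro h0
        rw [h0, div_zero] at hval
        exact one_ne_zero hval.symm
      exact ((div_eq_one_iff_eq hσxne).mp hval).symm
  -- Galois correspondence
  have hff : IntermediateField.fixedField (Subgroup.zpowers σ)
      = IntermediateField.fixedField (Subgroup.zpowers (σ ^ 2)) := by
    apply le_antisymm
    · intro x hx
      rw [fixedField_zpowers_mem] at hx ⊢
      rw [pow_two_apply, hx, hx]
    · intro x hx
      rw [fixedField_zpowers_mem] at hx ⊢
      rw [pow_two_apply] at hx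
      exact hfix x hx
  have hzp : Subgroup.zpowers σ = Subgroup.zpowers (σ ^ 2) := by
    rw [← IntermediateField.fixingSubgroup_fixedField (Subgroup.zpowers σ),
      ← IntermediateField.fixingSubgroup_fixedField (Subgroup.zpowers (σ ^ 2)), hff]
  have hσmem : σ ∈ Subgroup.zpowers (σ ^ 2) := hzp ▸ Subgroup.mem_zpowers σ
  obtain ⟨j, hj⟩ := hσmem
  have hj2 : (σ ^ (2 : ℕ)) ^ j = σ := hj
  have hj3 : σ ^ (2 * j : ℤ) = σ := by
    have h1 : σ ^ (2 * j : ℤ) = (σ ^ (2 : ℕ)) ^ j := by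
      rw [← zpow_natCast σ 2, ← zpow_mul]
      norm_num
    rw [h1, hj2]
  have hj' : σ ^ (2 * j - 1 : ℤ) = 1 := by
    rw [zpow_sub, hj3, zpow_one]; simp
  have h2d : ((2 * r : ℕ) : ℤ) ∣ (2 * j - 1) := by
    rw [← hord]
    exact orderOf_dvd_iff_zpow_eq_one.mpr hj'
  have h3 : (2 : ℤ) ∣ 2 * j - 1 := by
    refine dvd_trans ⟨(r : ℤ), by push_cast; ring⟩ h2d
  omega

private lemma infinite_branch [Infinite L] (hr : 1 ≤ r) (hord : orderOf σ = 2 * r)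
    (H : ∀ b : L, σ (Pf σ r b) = Pf σ r b) : False := by
  classical
  have h2r : σ ^ (2 * r) = 1 := by rw [← hord]; exact pow_orderOf_eq_one σ
  obtain ⟨α, hα⟩ := Field.exists_primitive_element K L
  have hprim : ∀ m, 0 < m → m < 2 * r → (σ ^ m) α ≠ α := by
    intro m hm hm2 hfixα
    have hM : K⟮α⟯ ≤ IntermediateField.fixedField (Subgroup.zpowers (σ ^ m)) :=
      IntermediateField.adjoin_simple_le_iff.mpr
        ((fixedField_zpowers_mem (σ ^ m) α).mpr hfixα)
    rw [hα] at hM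
    have hone : σ ^ m = 1 := by
      ext x
      have hx : x ∈ IntermediateField.fixedField (Subgroup.zpowers (σ ^ m)) :=
        hM (IntermediateField.mem_top)
      exact (fixedField_zpowers_mem (σ ^ m) x).mp hx
    have := orderOf_dvd_of_pow_eq_one hone
    rw [hord] at this
    have := Nat.le_of_dvd hm this
    omega
  set f : Polynomial L :=
    (∏ k ∈ range r, (Polynomial.X + Polynomial.C ((σ ^ (2 * k)) α)))
      - ∏ k ∈ range r, (Polynomial.X + Polynomial.C ((σ ^ (2 * k + 1)) α)) with hfdef
  have hf : f ≠ 0 := by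
    intro h0
    have heval := congrArg (Polynomial.eval (-α)) h0
    rw [hfdef] at heval
    simp only [Polynomial.eval_sub, Polynomial.eval_prod, Polynomial.eval_add,
      Polynomial.eval_X, Polynomial.eval_C, Polynomial.eval_zero] at heval
    have hzero1 : (∏ k ∈ range r, (-α + (σ ^ (2 * k)) α)) = 0 :=
      Finset.prod_eq_zero (Finset.mem_range.mpr (by omega : 0 < r)) (by simp)
    rw [hzero1, zero_sub, neg_eq_zero] at heval
    obtain ⟨k, hk, hk0⟩ := Finset.prod_eq_zero_iff.mp heval
    have : (σ ^ (2 * k + 1)) α = α := by linear_combination hk0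
    exact hprim (2 * k + 1) (by omega) (by have := Finset.mem_range.mp hk; omega) this
  have hKinf : Infinite K := by
    by_contra hfin
    rw [not_infinite_iff_finite] at hfin
    have : Finite L := Module.finite_of_finite K
    exact absurd this (by rw [not_finite_iff_infinite]; infer_instance)
  have hFinf : {z : L | σ z = z}.Infinite :=
    Set.infinite_of_injective_forall_mem (f := fun k : K => algebraMap K L k)
      (algebraMap K L).injective (fun a => AlgEquiv.commutes σ a)
  obtain ⟨c, hcF, hcroot⟩ := hFinf.exists_notMem_finset f.roots.toFinset
  have hcfix : ∀ m : ℕ, (σ ^ m) c = c := fixPow hcF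
  have hPb : Pf σ r (α + c)
      = Polynomial.eval c (∏ k ∈ range r, (Polynomial.X + Polynomial.C ((σ ^ (2 * k)) α))) := by
    rw [Pf, Polynomial.eval_prod]
    refine Finset.prod_congr rfl fun k _ => ?_
    rw [Polynomial.eval_add, Polynomial.eval_X, Polynomial.eval_C, map_add, hcfix]
    ring
  have hPb2 : σ (Pf σ r (α + c))
      = Polynomial.eval c
        (∏ k ∈ range r, (Polynomial.X + Polynomial.C ((σ ^ (2 * k + 1)) α))) := by
    rw [sigma_Pf, Polynomial.eval_prod]
    refine Finset.prod_congr rfl fun k _ => ?_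
    rw [Polynomial.eval_add, Polynomial.eval_X, Polynomial.eval_C, map_add, hcfix]
    ring
  have hfc : Polynomial.eval c f = 0 := by
    rw [hfdef, Polynomial.eval_sub, ← hPb, ← hPb2, H (α + c), sub_self]
  exact hcroot (Multiset.mem_toFinset.mpr ((Polynomial.mem_roots hf).mpr hfc))

private lemma exists_good (hr : 1 ≤ r) (hord : orderOf σ = 2 * r) :
    ∃ b' : L, b' ≠ 0 ∧ ∏ k ∈ range r, (σ ^ (2 * k)) (-b' / σ b') ≠ 1 := by
  have key : ∃ b' : L, b' ≠ 0 ∧ (-1 : L) ^ r * Pf σ r b' ≠ σ (Pf σ r b') := by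
    by_cases hneg : ((-1 : L)) ^ r = 1
    · by_contra hcon
      push_neg at hcon
      have H : ∀ b : L, σ (Pf σ r b) = Pf σ r b := by
        intro b
        by_cases hb : b = 0
        · rw [hb, Pf_zero σ r hr, map_zero]
        · rw [← hcon b hb, hneg, one_mul]
      cases finite_or_infinite L with
      | inl h => exact finite_branch σ r hr hord H
      | inr h => exact infinite_branch σ r hr hord H
    · refine ⟨1, one_ne_zero, ?_⟩
      rw [Pf_one, map_one, mul_one]
      exact hneg
  obtain ⟨b', hb', hkey⟩ := key
  refine ⟨b', hb', ?_⟩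
  have hexp : ∏ k ∈ range r, (σ ^ (2 * k)) (-b' / σ b')
      = ((-1 : L) ^ r * Pf σ r b') / σ (Pf σ r b') := by
    have h1 : ∀ k, (σ ^ (2 * k)) (-b' / σ b')
        = (-1) * (σ ^ (2 * k)) b' / (σ ^ (2 * k)) (σ b') := by
      intro k
      rw [map_div₀, map_neg]
      ring
    rw [Finset.prod_congr rfl fun k _ => h1 k, Finset.prod_div_distrib,
      Finset.prod_mul_distrib, Finset.prod_const, Finset.card_range,
      ← sigma_Pf' σ r b']
    rfl
  rw [hexp]
  intro hdiv
  have hPfne : σ (Pf σ r b') ≠ 0 := by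
    intro h0
    exact Pf_ne_zero σ r hb' (by simpa using congrArg σ.symm h0)
  exact hkey ((div_eq_one_iff_eq hPfne).mp hdiv)

end Helpers2

/-- If `σ ∈ Gal(L/K)` has even order `2r`, then there exist nonzero elements
`b, b' ∈ L` such that `φ_{b,σ}` is degenerate and `φ_{b',σ}` is nondegenerate, where
`φ_{b,σ}(x,y) = Tr_{L/K}(b·(x·σ(y) + σ(x)·y))`. -/
theorem exists_degenerate_and_nondegenerate_of_even_order (K L : Type*) [Field K] [Field L]
    [Algebra K L] [FiniteDimensional K L] [IsGalois K L] (h2 : (2 : K) ≠ 0)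
    (σ : L ≃ₐ[K] L) (r : ℕ) (hr : 1 ≤ r) (hord : orderOf σ = 2 * r) :
    (∃ b : L, b ≠ 0 ∧
        ∃ x : L, x ≠ 0 ∧ ∀ y : L, Algebra.trace K L (b * (x * σ y + σ x * y)) = 0) ∧
    (∃ b' : L, b' ≠ 0 ∧
        ∀ x : L, (∀ y : L, Algebra.trace K L (b' * (x * σ y + σ x * y)) = 0) → x = 0) := by
  constructor
  · -- degenerate part
    obtain ⟨b, hb, hskew⟩ := exists_skew σ r hr hord
    refine ⟨b, hb, 1, one_ne_zero, ?_⟩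
    intro y
    have hsymm : σ.symm b = -b := by
      have h1 := congrArg σ.symm hskew
      rw [AlgEquiv.symm_apply_apply, map_neg] at h1
      exact neg_eq_iff_eq_neg.mp h1.symm
    have hrw : b * (1 * σ y + σ 1 * y) = b * σ y + b * y := by
      rw [map_one]; ring
    rw [hrw, map_add]
    have h1 : Algebra.trace K L (b * σ y) = Algebra.trace K L (σ.symm b * y) := by
      conv_lhs => rw [show b * σ y = σ (σ.symm b * y) by
        rw [map_mul, AlgEquiv.apply_symm_apply]]
      exact traceInv σ _
    rw [h1, hsymm, show (-b) * y = -(b * y) by ring, map_neg, neg_add_cancel]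
  · -- nondegenerate part
    obtain ⟨b', hb', hgood⟩ := exists_good σ r hr hord
    refine ⟨b', hb', ?_⟩
    intro x hx
    by_contra hx0
    have hrel : b' * x + σ b' * σ (σ x) = 0 := radical_rel σ b' x hx
    have hσb' : σ b' ≠ 0 := by
      intro h0
      exact hb' (by simpa using congrArg σ.symm h0)
    set c : L := -b' / σ b' with hc
    have hσσx : σ (σ x) = c * x := by
      rw [hc, div_mul_eq_mul_div, eq_div_iff hσb']
      linear_combination hrel
    have hkey : ∀ k : ℕ, (σ ^ (2 * k)) x = (∏ j ∈ range k, (σ ^ (2 * j)) c) * x := by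
      intro k
      induction k with
      | zero => simp
      | succ k ih =>
        have h1 : (σ ^ (2 * (k + 1))) x = σ (σ ((σ ^ (2 * k)) x)) := by
          rw [shift2a, show 2 * k + 2 = 2 * (k + 1) from by ring]
        rw [h1, ih, map_mul, map_mul]
        have h2 : σ (σ ((∏ j ∈ range k, (σ ^ (2 * j)) c)))
            = ∏ j ∈ range k, (σ ^ (2 * (j + 1))) c := by
          rw [map_prod, map_prod]
          exact Finset.prod_congr rfl fun j _ => by
            rw [show 2 * (j + 1) = 2 * j + 2 from by ring]
            exact shift2a σ (2 * j) c
        rw [h2, hσσx]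
        have h3 := Finset.prod_range_succ' (fun j => (σ ^ (2 * j)) c) k
        simp only [Nat.mul_zero, pow_zero, AlgEquiv.one_apply] at h3
        rw [h3]
        ring
    have h2r : σ ^ (2 * r) = 1 := by rw [← hord]; exact pow_orderOf_eq_one σ
    have hfinal := hkey r
    rw [h2r, AlgEquiv.one_apply] at hfinal
    have hone : (∏ j ∈ range r, (σ ^ (2 * j)) c) = 1 :=
      mul_right_cancel₀ hx0 (by rw [one_mul, ← hfinal])
    exact hgood hone
end

section
/- Suppose σ ∈ G has order 2. Then for b ∈ L the form φ_{b,σ} is zero if and only if σ(b) = −b, and whenever φ_{b,σ} is nonzero it is nondegenerate. -/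
/-- Suppose `σ ∈ Gal(L/K)` has order `2`.  Then for `b ∈ L` the form
`φ_{b,σ}(x,y) = Tr_{L/K}(b·(x·σ(y) + σ(x)·y))` is zero if and only if `σ(b) = −b`, and
whenever `φ_{b,σ}` is nonzero it is nondegenerate. -/
theorem order_two_zero_or_nondegenerate (K L : Type*) [Field K] [Field L] [Algebra K L]
    [FiniteDimensional K L] [IsGalois K L] (h2 : (2 : K) ≠ 0)
    (σ : L ≃ₐ[K] L) (hord : orderOf σ = 2) (b : L) :
    ((∀ x y : L, Algebra.trace K L (b * (x * σ y + σ x * y)) = 0) ↔ σ b = -b) ∧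
    ((¬ ∀ x y : L, Algebra.trace K L (b * (x * σ y + σ x * y)) = 0) →
      ∀ x : L, (∀ y : L, Algebra.trace K L (b * (x * σ y + σ x * y)) = 0) → x = 0) := by
  have hσ2 : ∀ y : L, σ (σ y) = y := by
    have h : σ ^ 2 = 1 := by rw [← hord]; exact pow_orderOf_eq_one σ
    intro y
    have := congrArg (fun f : L ≃ₐ[K] L => f y) h
    simpa [pow_two] using this
  have htr : ∀ z : L, Algebra.trace K L (σ z) = Algebra.trace K L z := fun z =>
    Algebra.trace_eq_of_algEquiv σ z
  -- key identity: φ(x,y) = Tr((σ b + b) * σ x * y)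
  have key : ∀ x y : L, Algebra.trace K L (b * (x * σ y + σ x * y))
      = Algebra.trace K L ((σ b + b) * σ x * y) := by
    intro x y
    have h1 : Algebra.trace K L (b * (x * σ y)) = Algebra.trace K L (σ b * σ x * y) := by
      rw [← htr (b * (x * σ y))]
      simp only [map_mul, hσ2]
      ring_nf
    have := map_add (Algebra.trace K L) (b * (x * σ y)) (b * (σ x * y))
    rw [mul_add] at *
    rw [this, h1, ← map_add]
    ring_nf
  have nd := traceForm_nondegenerate K L
  have hnd : ∀ z : L, (∀ y : L, Algebra.trace K L (z * y) = 0) → z = 0 := by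
    intro z hz
    exact nd.1 z fun y => by simpa [Algebra.traceForm_apply] using hz y
  constructor
  · constructor
    · intro h
      have hc : σ b + b = 0 := by
        apply hnd
        intro y
        have := h 1 y
        rw [key] at this
        simpa using this
      exact eq_neg_of_add_eq_zero_left hc
    · intro h x y
      rw [key, h]
      simp
  · intro hne x hx
    have hc : σ b + b ≠ 0 := by
      intro hc
      apply hne
      intro x y
      rw [key, hc]
      simp
    have : (σ b + b) * σ x = 0 := by
      apply hnd
      intro y
      rw [← key]
      exact hx y
    rcases mul_eq_zero.mp this with h | h
    · exact absurd h hc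
    · have : σ x = 0 := h
      have := congrArg σ this
      rw [hσ2] at this
      simpa using this
end

section
/- Suppose L/K is a cyclic Galois extension of even degree n = 2r with Gal(L/K) = ⟨σ⟩, and let L₂ denote the fixed field of σ². For nonzero b ∈ L, the form φ_{b,σ} is degenerate if and only if (−1)^r · N_{L/L₂}(σ(b)/b) = 1, and this holds if and only if (−1)^r · N_{L/L₂}(b) = σ(N_{L/L₂}(b)), i.e. N_{L/L₂}(b) = b·σ²(b)⋯σ^{n−2}(b) is an eigenvector of σ for the eigenvalue (−1)^r. -/
open Module

section Helpers

variable {K L : Type*} [Field K] [Field L] [Algebra K L]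

lemma norm_one_of_eigen (τ : L ≃ₐ[K] L) {r : ℕ} (hord : τ ^ r = 1)
    {c x : L} (hx : x ≠ 0) (heig : τ x = c * x) :
    ∏ j ∈ Finset.range r, (τ ^ j) c = 1 := by
  have hτx : ∀ j : ℕ, (τ ^ j) x ≠ 0 := fun j => (map_ne_zero_iff _ (τ ^ j).injective).2 hx
  have hc : c = τ x / x := by rw [heig, mul_div_assoc, div_self hx, mul_one]
  have hstep : ∀ j : ℕ, (τ ^ j) c = (τ ^ (j + 1)) x / (τ ^ j) x := by
    intro j
    rw [hc, map_div₀]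
    congr 1
  have tele : ∀ n : ℕ, ∏ j ∈ Finset.range n, ((τ ^ (j + 1)) x / (τ ^ j) x) = (τ ^ n) x / x := by
    intro n
    induction n with
    | zero => simp [div_self hx]
    | succ n ih =>
      rw [Finset.prod_range_succ, ih, div_mul_div_comm, mul_comm x ((τ ^ n) x),
        mul_div_mul_left _ _ (hτx n)]
  calc ∏ j ∈ Finset.range r, (τ ^ j) c
      = ∏ j ∈ Finset.range r, ((τ ^ (j + 1)) x / (τ ^ j) x) :=
        Finset.prod_congr rfl fun j _ => hstep j
    _ = (τ ^ r) x / x := tele r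
    _ = 1 := by rw [hord]; simp [div_self hx]

lemma hilbert90_cyclic_s10 (τ : L ≃ₐ[K] L) {r : ℕ} (hr : 1 ≤ r) (hord : orderOf τ = r)
    {c : L} (hc : c ≠ 0) (hN : ∏ j ∈ Finset.range r, (τ ^ j) c = 1) :
    ∃ x : L, x ≠ 0 ∧ τ x = c * x := by
  classical
  set p : ℕ → L := fun j => ∏ k ∈ Finset.range j, (τ ^ k) c with hp
  have hp0 : p 0 = 1 := by simp [hp]
  have hpne : ∀ j, p j ≠ 0 := fun j => Finset.prod_ne_zero_iff.2 fun k _ =>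
    (map_ne_zero_iff _ (τ ^ k).injective).2 hc
  have hkey : ∀ j, p (j + 1) = τ (p j) * c := by
    intro j
    have h1 : τ (p j) = ∏ k ∈ Finset.range j, (τ ^ (k + 1)) c := by
      rw [hp, map_prod]
      refine Finset.prod_congr rfl fun k _ => ?_
      rw [pow_succ']
      rfl
    show ∏ k ∈ Finset.range (j + 1), (τ ^ k) c = τ (p j) * c
    rw [Finset.prod_range_succ', ← h1]
    simp
  set m : ℕ → (L →* L) := fun j => ((τ ^ j : L ≃ₐ[K] L) : L →* L) with hm
  have hminj : ∀ i ∈ Finset.range r, ∀ j ∈ Finset.range r, m i = m j → i = j := by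
    intro i hi j hj h
    have h2 : τ ^ i = τ ^ j := by
      ext z
      exact DFunLike.congr_fun h z
    exact pow_injOn_Iio_orderOf (by simpa [hord] using Finset.mem_range.1 hi)
      (by simpa [hord] using Finset.mem_range.1 hj) h2
  obtain ⟨z, hz⟩ : ∃ z : L, ∑ j ∈ Finset.range r, p j * (τ ^ j) z ≠ 0 := by
    by_contra h
    push_neg at h
    set g : (L →* L) →₀ L := ∑ j ∈ Finset.range r, Finsupp.single (m j) (p j) with hg
    have hcomb : Finsupp.linearCombination L (fun f : L →* L => (f : L → L)) g = 0 := by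
      rw [hg, map_sum]
      funext w
      rw [Finset.sum_apply]
      have : ∀ j ∈ Finset.range r,
          (Finsupp.linearCombination L (fun f : L →* L => (f : L → L))
            (Finsupp.single (m j) (p j))) w = p j * (τ ^ j) w := by
        intro j _
        rw [Finsupp.linearCombination_single]
        simp [hm, smul_eq_mul]
      rw [Finset.sum_congr rfl this]
      simpa using h w
    have hg0 : g = 0 := linearIndependent_iff.1 (linearIndependent_monoidHom L L) g hcomb
    have : g (m 0) = p 0 := by
      rw [hg, Finsupp.finset_sum_apply]
      rw [Finset.sum_eq_single_of_mem 0 (Finset.mem_range.2 hr)]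
      · simp
      · intro j hj hj0
        rw [Finsupp.single_apply, if_neg]
        intro heq
        exact hj0 (hminj j hj 0 (Finset.mem_range.2 hr) heq)
    rw [hg0, hp0] at this
    simp at this
  set y : L := ∑ j ∈ Finset.range r, p j * (τ ^ j) z with hy
  have hcy : c * τ y = y := by
    have h1 : c * τ y = ∑ j ∈ Finset.range r, p (j + 1) * (τ ^ (j + 1)) z := by
      rw [hy, map_sum, Finset.mul_sum]
      refine Finset.sum_congr rfl fun j _ => ?_
      rw [map_mul, hkey j]
      have h5 : (τ ^ (j + 1)) z = τ ((τ ^ j) z) := by rw [pow_succ']; rfl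
      rw [h5]
      ring
    have hfr : p r * (τ ^ r) z = z := by
      have : (τ ^ r : L ≃ₐ[K] L) = 1 := by rw [← hord]; exact pow_orderOf_eq_one τ
      rw [show p r = 1 from hN, this]
      simp
    have hf0 : p 0 * (τ ^ 0) z = z := by rw [hp0]; simp
    have h2 : ∑ j ∈ Finset.range r, p (j + 1) * (τ ^ (j + 1)) z = y := by
      have e1 := Finset.sum_range_succ' (fun j => p j * (τ ^ j) z) r
      have e2 := Finset.sum_range_succ (fun j => p j * (τ ^ j) z) r
      rw [e2] at e1
      rw [hy]
      rw [hfr, hf0] at e1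
      linear_combination -e1
    rw [h1, h2]
  have hyne : y ≠ 0 := hz
  have hτy : τ y ≠ 0 := (map_ne_zero_iff _ τ.injective).2 hyne
  refine ⟨y⁻¹, inv_ne_zero hyne, ?_⟩
  have hτyeq : τ y = y / c := by
    rw [eq_div_iff hc]
    linear_combination hcy
  rw [map_inv₀, hτyeq, inv_div, div_eq_mul_inv]

end Helpers

/-- Let `L/K` be a cyclic Galois extension of even degree `n = 2r` with
`Gal(L/K) = ⟨σ⟩`, and let `L₂` be the fixed field of `σ²`.  For nonzero `b ∈ L`, the form
`φ_{b,σ}(x,y) = Tr_{L/K}(b·(x·σ(y) + σ(x)·y))` is degenerate if and only if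
`(−1)^r · N_{L/L₂}(σ(b)/b) = 1`, and this holds if and only if
`(−1)^r · N_{L/L₂}(b) = σ(N_{L/L₂}(b))`, i.e. `N_{L/L₂}(b) = b·σ²(b)⋯σ^{n−2}(b)` is an
eigenvector of `σ` for the eigenvalue `(−1)^r`. -/
theorem degenerate_iff_cyclic_even (K L : Type*) [Field K] [Field L] [Algebra K L]
    [FiniteDimensional K L] [IsGalois K L] (h2 : (2 : K) ≠ 0)
    (σ : L ≃ₐ[K] L) (hgen : ∀ τ : L ≃ₐ[K] L, τ ∈ Subgroup.zpowers σ)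
    (r : ℕ) (hr : 1 ≤ r) (hn : finrank K L = 2 * r)
    (L₂ : IntermediateField K L)
    (hL₂ : L₂ = IntermediateField.fixedField (Subgroup.zpowers (σ ^ 2)))
    (b : L) (hb : b ≠ 0) :
    ((∃ x : L, x ≠ 0 ∧ ∀ y : L, Algebra.trace K L (b * (x * σ y + σ x * y)) = 0) ↔
      (-1 : L) ^ r * algebraMap L₂ L (Algebra.norm L₂ (σ b / b)) = 1) ∧
    ((∃ x : L, x ≠ 0 ∧ ∀ y : L, Algebra.trace K L (b * (x * σ y + σ x * y)) = 0) ↔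
      (-1 : L) ^ r * algebraMap L₂ L (Algebra.norm L₂ b) =
        σ (algebraMap L₂ L (Algebra.norm L₂ b))) ∧
    algebraMap L₂ L (Algebra.norm L₂ b) = ∏ i ∈ Finset.range r, (σ ^ (2 * i)) b := by
  classical
  have hσb : σ b ≠ 0 := (map_ne_zero_iff _ σ.injective).2 hb
  set τ : L ≃ₐ[K] L := σ ^ 2 with hτ
  -- orders
  have hordσ : orderOf σ = 2 * r := by
    rw [orderOf_eq_card_of_forall_mem_zpowers hgen,
      IsGalois.card_aut_eq_finrank, hn]
  have hordτ : orderOf τ = r := by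
    rw [hτ, orderOf_pow, hordσ, Nat.gcd_eq_right ⟨r, rfl⟩,
      Nat.mul_div_cancel_left r (by norm_num)]
  -- norm as product
  have hNf : ∀ a : L, algebraMap L₂ L (Algebra.norm L₂ a) =
      ∏ i ∈ Finset.range r, (σ ^ (2 * i)) a := by
    intro a
    rw [Algebra.norm_eq_prod_automorphisms]
    have hmem : ∀ i : ℕ, σ ^ (2 * i) ∈ L₂.fixingSubgroup := by
      intro i
      rw [hL₂, IntermediateField.fixingSubgroup_fixedField, pow_mul]
      exact Subgroup.pow_mem _ (Subgroup.mem_zpowers _) i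
    set e : Fin r → (L ≃ₐ[L₂] L) := fun i =>
      IntermediateField.fixingSubgroupEquiv L₂ ⟨σ ^ (2 * (i : ℕ)), hmem i⟩ with he
    have happ : ∀ i : Fin r, (e i) a = (σ ^ (2 * (i : ℕ))) a := fun i => rfl
    have hinj : Function.Injective e := by
      intro i j hij
      have h2 : σ ^ (2 * (i : ℕ)) = σ ^ (2 * (j : ℕ)) :=
        Subtype.ext_iff.1 ((IntermediateField.fixingSubgroupEquiv L₂).injective hij)
      have := pow_injOn_Iio_orderOf (x := σ)
        (by rw [hordσ]; exact Set.mem_Iio.2 (by omega))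
        (by rw [hordσ]; exact Set.mem_Iio.2 (by omega)) h2
      exact Fin.ext (by omega)
    have hbij : Function.Bijective e :=
      (Fintype.bijective_iff_injective_and_card e).2 ⟨hinj, by
        rw [Fintype.card_fin, ← Nat.card_eq_fintype_card, IsGalois.card_aut_eq_finrank, hL₂,
          IntermediateField.finrank_fixedField_eq_card, Nat.card_zpowers, hordτ]⟩
    rw [← Fintype.prod_bijective e hbij (fun i => (σ ^ (2 * (i : ℕ))) a) (fun t => t a)
      (fun i => (happ i).symm)]
    rw [← Fin.prod_univ_eq_prod_range (fun i => (σ ^ (2 * i)) a) r]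
  -- trace invariance
  have htr : ∀ g : L ≃ₐ[K] L, ∀ z : L, Algebra.trace K L (g z) = Algebra.trace K L z := by
    intro g z
    apply (algebraMap K L).injective
    rw [trace_eq_sum_automorphisms, trace_eq_sum_automorphisms]
    exact Fintype.sum_equiv (Equiv.mulRight g) (fun h => h (g z)) (fun h => h z) (fun h => rfl)
  -- the eigenvalue
  set c : L := -(b / σ b) with hc
  have hcne : c ≠ 0 := by
    rw [hc]
    simp [div_ne_zero hb hσb]
  -- degeneracy reformulation
  have hdeg : (∃ x : L, x ≠ 0 ∧ ∀ y : L, Algebra.trace K L (b * (x * σ y + σ x * y)) = 0) ↔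
      (∃ x : L, x ≠ 0 ∧ τ x = c * x) := by
    have key : ∀ x : L,
        (∀ y : L, Algebra.trace K L (b * (x * σ y + σ x * y)) = 0) ↔ τ x = c * x := by
      intro x
      have hτx : τ x = σ (σ x) := by rw [hτ, sq, AlgEquiv.mul_apply]
      have ht : ∀ y : L, Algebra.trace K L (b * (x * σ y + σ x * y)) =
          Algebra.trace K L ((σ.symm (b * x) + b * σ x) * y) := by
        intro y
        rw [mul_add, map_add]
        have h1 : Algebra.trace K L (b * (x * σ y)) = Algebra.trace K L (σ.symm (b * x) * y) := by
          rw [← htr σ (σ.symm (b * x) * y)]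
          congr 1
          rw [map_mul, AlgEquiv.apply_symm_apply]
          ring
        rw [h1, ← map_add, add_mul]
        congr 1
        ring
      constructor
      · intro h
        have hz : σ.symm (b * x) + b * σ x = 0 := by
          apply (traceForm_nondegenerate K L).1
          intro y
          rw [Algebra.traceForm_apply, ← ht y]
          exact h y
        have hz2 : b * x + σ b * τ x = 0 := by
          have h3 := congrArg σ hz
          rw [map_add, AlgEquiv.apply_symm_apply, map_mul, map_zero] at h3
          rw [hτx]
          exact h3
        have h4 : τ x = -(b * x) / σ b := by
          rw [eq_div_iff hσb]
          linear_combination hz2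
        rw [hc, h4]
        field_simp
      · intro h y
        rw [ht y]
        have hz : σ.symm (b * x) + b * σ x = 0 := by
          apply σ.injective
          rw [map_add, AlgEquiv.apply_symm_apply, map_mul, map_zero, ← hτx, h, hc]
          field_simp
          ring
        rw [hz, zero_mul, map_zero]
    constructor
    · rintro ⟨x, hx, h⟩; exact ⟨x, hx, (key x).1 h⟩
    · rintro ⟨x, hx, h⟩; exact ⟨x, hx, fun y => (key x).2 h y⟩
  have hdeg2 : (∃ x : L, x ≠ 0 ∧ τ x = c * x) ↔ ∏ j ∈ Finset.range r, (τ ^ j) c = 1 := by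
    constructor
    · rintro ⟨x, hx, h⟩
      exact norm_one_of_eigen τ (by rw [← hordτ]; exact pow_orderOf_eq_one τ) hx h
    · intro h
      exact hilbert90_cyclic_s10 τ hr hordτ hcne h
  -- notation
  set Nb : L := ∏ j ∈ Finset.range r, (σ ^ (2 * j)) b with hNb
  have hNbne : Nb ≠ 0 := Finset.prod_ne_zero_iff.2 fun j _ =>
    (map_ne_zero_iff _ (σ ^ (2 * j)).injective).2 hb
  have hσNbne : σ Nb ≠ 0 := (map_ne_zero_iff _ σ.injective).2 hNbne
  have hcomm : ∀ j : ℕ, ∀ w : L, σ ((σ ^ (2 * j)) w) = (σ ^ (2 * j)) (σ w) := by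
    intro j w
    rw [← AlgEquiv.mul_apply, ← AlgEquiv.mul_apply, ← pow_succ', ← pow_succ]
  have hσNb : σ Nb = ∏ j ∈ Finset.range r, (σ ^ (2 * j)) (σ b) := by
    rw [hNb, map_prod]
    exact Finset.prod_congr rfl fun j _ => hcomm j b
  have hprodc : ∏ j ∈ Finset.range r, (τ ^ j) c = (-1 : L) ^ r * Nb / σ Nb := by
    have hpow : ∀ j : ℕ, (τ ^ j : L ≃ₐ[K] L) = σ ^ (2 * j) := fun j => by
      rw [hτ, ← pow_mul]
    calc ∏ j ∈ Finset.range r, (τ ^ j) c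
        = ∏ j ∈ Finset.range r, ((-1) * ((σ ^ (2 * j)) b / (σ ^ (2 * j)) (σ b))) := by
          refine Finset.prod_congr rfl fun j _ => ?_
          rw [hpow j, hc, map_neg, map_div₀]
          ring
      _ = (-1 : L) ^ r * Nb / σ Nb := by
          rw [Finset.prod_mul_distrib, Finset.prod_const, Finset.prod_div_distrib,
            Finset.card_range, ← hNb, ← hσNb]
          ring
  have hεε : ((-1 : L)) ^ r * (-1 : L) ^ r = 1 := by
    rw [← mul_pow]
    norm_num
  have hmain : (∃ x : L, x ≠ 0 ∧ ∀ y : L, Algebra.trace K L (b * (x * σ y + σ x * y)) = 0) ↔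
      (-1 : L) ^ r * Nb = σ Nb := by
    rw [hdeg, hdeg2, hprodc, div_eq_one_iff_eq hσNbne]
  refine ⟨?_, ?_, hNf b⟩
  · rw [hNf (σ b / b), hmain]
    have hNdiv : ∏ i ∈ Finset.range r, (σ ^ (2 * i)) (σ b / b) = σ Nb / Nb := by
      rw [hσNb, hNb, ← Finset.prod_div_distrib]
      exact Finset.prod_congr rfl fun j _ => by rw [map_div₀]
    rw [hNdiv, ← mul_div_assoc, div_eq_one_iff_eq hNbne]
    constructor
    · intro h
      linear_combination Nb * hεε - (-1 : L) ^ r * h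
    · intro h
      linear_combination σ Nb * hεε - (-1 : L) ^ r * h
  · rw [hNf b, hmain]
end

section
/- Let n = 2^α·k with α ≥ 2 and k odd, and let L/K be a cyclic Galois extension of degree n with Gal(L/K) = ⟨σ⟩. Then for each 1 ≤ i ≤ α − 1, the K-subspace E_i := {b ∈ L : σ^{n/2^i}(b) = −b} of L has K-dimension n/2^i. -/
open Module

/-- Let `n = 2^α·k` with `α ≥ 2` and `k` odd, and let `L/K` be a cyclic
Galois extension of degree `n` with `Gal(L/K) = ⟨σ⟩`.  Then for each `1 ≤ i ≤ α − 1`, the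
`K`-subspace `E_i = {b ∈ L : σ^{n/2^i}(b) = −b}` of `L` (the kernel of the `K`-linear
endomorphism `σ^{n/2^i} + id` of `L`) has `K`-dimension `n/2^i`. -/
theorem dim_eigenspace_neg_one (K L : Type*) [Field K] [Field L] [Algebra K L]
    [FiniteDimensional K L] [IsGalois K L] (h2 : (2 : K) ≠ 0)
    (n α k : ℕ) (hα : 2 ≤ α) (hk : Odd k) (hnk : n = 2 ^ α * k)
    (hn : finrank K L = n)
    (σ : L ≃ₐ[K] L) (hgen : ∀ τ : L ≃ₐ[K] L, τ ∈ Subgroup.zpowers σ)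
    (i : ℕ) (hi1 : 1 ≤ i) (hi2 : i ≤ α - 1) :
    finrank K (LinearMap.ker ((σ ^ (n / 2 ^ i)).toLinearMap + LinearMap.id)) = n / 2 ^ i := by
  classical
  have hnpos : 0 < n := hn ▸ finrank_pos
  have hia : i ≤ α := le_trans hi2 (Nat.sub_le α 1)
  have hdvd : (2 : ℕ) ^ i ∣ n := hnk ▸ Dvd.dvd.mul_right (pow_dvd_pow 2 hia) k
  set d := 2 ^ i with hd
  set m := n / 2 ^ i with hm
  have hdpos : 0 < d := pow_pos (by norm_num) i
  have hnm : d * m = n := Nat.mul_div_cancel' hdvd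
  have hmpos : 0 < m := Nat.div_pos (Nat.le_of_dvd hnpos hdvd) hdpos
  have hmdvd : m ∣ n := ⟨d, by rw [← hnm, mul_comm]⟩
  set τ := σ ^ m with hτ
  have hcard : Fintype.card (L ≃ₐ[K] L) = n := by
    rw [← Nat.card_eq_fintype_card, IsGalois.card_aut_eq_finrank, hn]
  have horderσ : orderOf σ = n := by
    rw [orderOf_eq_card_of_forall_mem_zpowers hgen, Nat.card_eq_fintype_card, hcard]
  have horderτ : orderOf τ = d := by
    rw [hτ, orderOf_pow' σ hmpos.ne', horderσ, Nat.gcd_eq_right hmdvd, ← hnm,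
      Nat.mul_div_cancel _ hmpos]
  -- linear independence of the characters τ^j, j < d
  have hLI : LinearIndependent L (fun f : L ≃ₐ[K] L => (f : L → L)) :=
    LinearIndependent.comp (ι' := L ≃ₐ[K] L) (linearIndependent_monoidHom L L)
      (fun f => f) (fun x y h => by ext; exact DFunLike.ext_iff.1 h _)
  have hinjpow : Function.Injective (fun j : Fin d => τ ^ (j : ℕ)) := by
    intro x y h
    have := pow_injOn_Iio_orderOf (x := τ) (by rw [horderτ]; exact x.2) (by rw [horderτ]; exact y.2) h
    exact Fin.ext this
  have hLI2 : LinearIndependent L (fun j : Fin d => ((τ ^ (j : ℕ) : L ≃ₐ[K] L) : L → L)) :=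
    hLI.comp _ hinjpow
  have hSne : ∃ a : L, (∑ j ∈ Finset.range d, ((-1 : L) ^ j) * (τ ^ j) a) ≠ 0 := by
    by_contra hcon
    push_neg at hcon
    have hzero : (∑ j : Fin d, ((-1 : L) ^ (j : ℕ)) • ((τ ^ (j : ℕ) : L ≃ₐ[K] L) : L → L)) = 0 := by
      funext a
      have := hcon a
      rw [← Fin.sum_univ_eq_sum_range (fun j => ((-1 : L) ^ j) * (τ ^ j) a) d] at this
      simpa [Finset.sum_apply] using this
    have := Fintype.linearIndependent_iff.1 hLI2 (fun j => ((-1 : L) ^ (j : ℕ))) hzero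
      ⟨0, hdpos⟩
    simp at this
  obtain ⟨a, ha⟩ := hSne
  set c : ℕ → L := fun j => ((-1 : L) ^ j) * (τ ^ j) a with hc
  set b : L := ∑ j ∈ Finset.range d, c j with hb
  have hbne : b ≠ 0 := ha
  have hdeven : Even d := Nat.even_pow.mpr ⟨even_two, by omega⟩
  have hcd : c d = c 0 := by
    simp only [hc, pow_zero, one_mul]
    rw [hdeven.neg_one_pow, ← horderτ, pow_orderOf_eq_one]
    simp
  have hτb : τ b = -b := by
    have hτc : ∀ j, τ (c j) = -(c (j + 1)) := by
      intro j
      simp only [hc, map_mul, map_pow, map_neg, map_one]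
      have : (τ ^ (j + 1)) a = τ ((τ ^ j) a) := by
        rw [pow_succ']; rfl
      rw [this, pow_succ]
      ring
    have hshift : ∑ j ∈ Finset.range d, c (j + 1) = ∑ j ∈ Finset.range d, c j := by
      have h1 := Finset.sum_range_succ c d
      have h2 := Finset.sum_range_succ' c d
      rw [h1, hcd] at h2
      exact (add_right_cancel h2).symm
    rw [hb, map_sum]
    simp_rw [hτc]
    simp only [Finset.sum_neg_distrib, neg_inj]
    exact hshift
  -- the fixed field
  set F := IntermediateField.fixedField (Subgroup.zpowers τ) with hF
  have hFL : finrank F L = d := by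
    rw [hF, IntermediateField.finrank_fixedField_eq_card, ← horderτ, ← Fintype.card_zpowers, Nat.card_eq_fintype_card]
  have hKF : finrank K F = m := by
    have h := finrank_mul_finrank K F L
    rw [hFL, hn, ← hnm, mul_comm d m] at h
    exact Nat.eq_of_mul_eq_mul_right hdpos h
  -- linear map from F to L, x ↦ x * b
  set φ : F →ₗ[K] L := (LinearMap.mulRight K b).comp F.val.toLinearMap with hφ
  have hφinj : Function.Injective φ := by
    intro x y h
    have : (x : L) * b = (y : L) * b := h
    exact Subtype.ext (mul_right_cancel₀ hbne this)
  have hτfix : ∀ x : L, x ∈ F → τ x = x := by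
    intro x hx
    exact hx ⟨τ, Subgroup.mem_zpowers τ⟩
  have hrange : LinearMap.range φ =
      LinearMap.ker ((σ ^ (n / 2 ^ i)).toLinearMap + LinearMap.id) := by
    have hστ : σ ^ (n / 2 ^ i) = τ := rfl
    ext x
    simp only [LinearMap.mem_range, LinearMap.mem_ker, LinearMap.add_apply, LinearMap.id_apply,
      hστ, AlgEquiv.toLinearMap_apply]
    constructor
    · rintro ⟨y, rfl⟩
      have : φ y = (y : L) * b := rfl
      rw [this, map_mul, hτfix _ y.2, hτb]
      ring
    · intro hx
      have hτx : τ x = -x := by linear_combination hx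
      rcases eq_or_ne x 0 with rfl | hx0
      · exact ⟨0, by simp [hφ]⟩
      · have hmem : x * b⁻¹ ∈ F := by
          have hstab : τ ∈ MulAction.stabilizer (L ≃ₐ[K] L) (x * b⁻¹) := by
            rw [MulAction.mem_stabilizer_iff]
            show τ (x * b⁻¹) = x * b⁻¹
            rw [map_mul, map_inv₀, hτx, hτb]
            field_simp
          intro g
          have hg : (g : L ≃ₐ[K] L) ∈ MulAction.stabilizer (L ≃ₐ[K] L) (x * b⁻¹) :=
            Subgroup.zpowers_le.mpr hstab g.2
          exact hg
        refine ⟨⟨x * b⁻¹, hmem⟩, ?_⟩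
        show (x * b⁻¹) * b = x
        field_simp
  rw [← hrange]
  rw [← hKF]
  exact (LinearEquiv.finrank_eq (LinearEquiv.ofInjective φ hφinj)).symm
end

section
/- Let n = 2^α·k with α ≥ 2 and k odd, and let L/K be a cyclic Galois extension of degree n with Gal(L/K) = ⟨σ⟩. Then the K-subspaces V₁ := {b ∈ L : σ^k(b) = b} and V₂ := {b ∈ L : σ^k(b) = −b} of L both have K-dimension k. -/
open Module

open Finset in
/-- For an automorphism `τ` of even (finite) order, there is a nonzero `w` with `τ w = -w`. -/
lemma exists_neg_eigenvector_aux (K L : Type*) [Field K] [Field L] [Algebra K L]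
    (τ : L ≃ₐ[K] L) (hme : Even (orderOf τ)) (hm0 : orderOf τ ≠ 0) :
    ∃ w : L, w ≠ 0 ∧ τ w = -w := by
  classical
  set m := orderOf τ with hmdef
  have hmpos : 0 < m := Nat.pos_of_ne_zero hm0
  -- linear independence of the distinct automorphisms τ^0, ..., τ^(m-1)
  have hli : LinearIndependent L (fun i : Fin m => (⇑(τ ^ (i : ℕ)) : L → L)) := by
    have h1 := linearIndependent_monoidHom L L
    refine (h1.comp (fun i : Fin m => ((τ ^ (i : ℕ) : L ≃ₐ[K] L) : L →* L)) ?_)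
    intro i j hij
    have hpow : (τ ^ (i : ℕ)) = (τ ^ (j : ℕ)) := by
      ext x
      exact DFunLike.congr_fun hij x
    exact Fin.ext (pow_injOn_Iio_orderOf (Set.mem_Iio.2 i.isLt) (Set.mem_Iio.2 j.isLt) hpow)
  -- find z with nonzero alternating sum
  obtain ⟨z, hz⟩ : ∃ z : L, ∑ i ∈ range m, (-1 : L) ^ i * (τ ^ i) z ≠ 0 := by
    by_contra h
    push_neg at h
    have hsum : ∑ i : Fin m, ((-1 : L) ^ (i : ℕ)) • (fun z => (τ ^ (i : ℕ)) z : L → L) = 0 := by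
      funext z
      have := h z
      rw [← Fin.sum_univ_eq_sum_range (fun i => (-1 : L) ^ i * (τ ^ i) z)] at this
      simpa using this
    have := Fintype.linearIndependent_iff.1 hli (fun i => (-1 : L) ^ (i : ℕ)) hsum
      ⟨0, hmpos⟩
    simpa using this
  refine ⟨∑ i ∈ range m, (-1 : L) ^ i * (τ ^ i) z, hz, ?_⟩
  have hg : ∀ i : ℕ, τ ((-1 : L) ^ i * (τ ^ i) z) = (-1 : L) ^ i * (τ ^ (i + 1)) z := by
    intro i
    rw [map_mul, map_pow, map_neg, map_one, pow_succ']
    rfl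
  rw [map_sum]
  calc ∑ i ∈ range m, τ ((-1 : L) ^ i * (τ ^ i) z)
      = ∑ i ∈ range m, (-1 : L) ^ i * (τ ^ (i + 1)) z := by
        exact Finset.sum_congr rfl fun i _ => hg i
    _ = -∑ i ∈ range m, (-1 : L) ^ (i + 1) * (τ ^ (i + 1)) z := by
        rw [← Finset.sum_neg_distrib]
        refine Finset.sum_congr rfl fun i _ => ?_
        rw [pow_succ]
        ring
    _ = -∑ i ∈ range m, (-1 : L) ^ i * (τ ^ i) z := by
        congr 1
        have h1 : ∑ i ∈ range (m + 1), (-1 : L) ^ i * (τ ^ i) z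
            = (∑ i ∈ range m, (-1 : L) ^ (i + 1) * (τ ^ (i + 1)) z) + (-1 : L) ^ 0 * (τ ^ 0) z :=
          Finset.sum_range_succ' _ m
        have h2 : ∑ i ∈ range (m + 1), (-1 : L) ^ i * (τ ^ i) z
            = (∑ i ∈ range m, (-1 : L) ^ i * (τ ^ i) z) + (-1 : L) ^ m * (τ ^ m) z :=
          Finset.sum_range_succ _ m
        have hm1 : (-1 : L) ^ m = 1 := hme.neg_one_pow
        have hτm : (τ ^ m) z = z := by rw [hmdef, pow_orderOf_eq_one]; rfl
        rw [h2, hm1, hτm, one_mul] at h1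
        simpa using h1.symm

/-- Let `n = 2^α·k` with `α ≥ 2` and `k` odd, and let `L/K` be a cyclic
Galois extension of degree `n` with `Gal(L/K) = ⟨σ⟩`.  Then the `K`-subspaces
`V₁ = {b ∈ L : σ^k(b) = b}` (the kernel of `σ^k − id`) and `V₂ = {b ∈ L : σ^k(b) = −b}`
(the kernel of `σ^k + id`) of `L` both have `K`-dimension `k`. -/
theorem dim_eigenspaces_sigma_pow_k (K L : Type*) [Field K] [Field L] [Algebra K L]
    [FiniteDimensional K L] [IsGalois K L] (h2 : (2 : K) ≠ 0)
    (n α k : ℕ) (hα : 2 ≤ α) (hk : Odd k) (hnk : n = 2 ^ α * k)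
    (hn : finrank K L = n)
    (σ : L ≃ₐ[K] L) (hgen : ∀ τ : L ≃ₐ[K] L, τ ∈ Subgroup.zpowers σ) :
    finrank K (LinearMap.ker ((σ ^ k).toLinearMap - LinearMap.id)) = k ∧
    finrank K (LinearMap.ker ((σ ^ k).toLinearMap + LinearMap.id)) = k := by
  classical
  set τ := σ ^ k with hτdef
  have hk0 : 0 < k := hk.pos
  have h2α : (0 : ℕ) < 2 ^ α := pow_pos two_pos α
  have hcard : Fintype.card (L ≃ₐ[K] L) = n := by
    rw [← Nat.card_eq_fintype_card, IsGalois.card_aut_eq_finrank, hn]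
  have hordσ : orderOf σ = n := by
    rw [orderOf_eq_card_of_forall_mem_zpowers hgen, Nat.card_eq_fintype_card, hcard]
  have hkn : k ∣ n := Dvd.intro_left _ hnk.symm
  have hordτ : orderOf τ = 2 ^ α := by
    rw [hτdef, orderOf_pow, hordσ, Nat.gcd_eq_right hkn, hnk, Nat.mul_div_cancel _ hk0]
  -- the fixed field of ⟨τ⟩
  set F := IntermediateField.fixedField (Subgroup.zpowers τ) with hF
  have hmem : ∀ b : L, b ∈ F ↔ τ b = b := by
    intro b
    constructor
    · intro hb
      exact hb ⟨τ, Subgroup.mem_zpowers τ⟩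
    · intro hb g
      obtain ⟨g, hg⟩ := g
      obtain ⟨j, rfl⟩ := Subgroup.mem_zpowers_iff.1 hg
      show (τ ^ j) b = b
      have hnat : ∀ i : ℕ, (τ ^ i) b = b := by
        intro i
        induction i with
        | zero => rfl
        | succ i ih => rw [pow_succ', AlgEquiv.mul_apply, ih, hb]
      cases j with
      | ofNat i => simpa using hnat i
      | negSucc i =>
          rw [zpow_negSucc]
          conv_lhs => rw [← hnat (i + 1)]
          rw [← AlgEquiv.mul_apply, inv_mul_cancel, AlgEquiv.one_apply]
  -- V₁ is the fixed field
  have hker1 : LinearMap.ker (τ.toLinearMap - LinearMap.id)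
      = Subalgebra.toSubmodule F.toSubalgebra := by
    ext b
    simp only [LinearMap.mem_ker, LinearMap.sub_apply, AlgEquiv.toLinearMap_apply,
      LinearMap.id_apply, sub_eq_zero, Subalgebra.mem_toSubmodule,
      IntermediateField.mem_toSubalgebra]
    exact (hmem b).symm
  have hFL : finrank F L = 2 ^ α := by
    rw [IntermediateField.finrank_fixedField_eq_card, ← hordτ]
    exact Nat.card_zpowers τ
  have hKF : finrank K F = k := by
    have hmul : finrank K F * finrank F L = finrank K L := finrank_mul_finrank K F L
    rw [hFL, hn, hnk, mul_comm (2 ^ α) k] at hmul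
    exact Nat.eq_of_mul_eq_mul_right h2α hmul
  have dim1 : finrank K (LinearMap.ker (τ.toLinearMap - LinearMap.id)) = k := by
    rw [hker1]
    exact hKF
  refine ⟨dim1, ?_⟩
  -- a nonzero `w` with `τ w = -w`
  obtain ⟨w, hw0, hw⟩ : ∃ w : L, w ≠ 0 ∧ τ w = -w := by
    refine exists_neg_eigenvector_aux K L τ ?_ ?_
    · rw [hordτ]
      exact (Nat.even_pow).2 ⟨even_two, by omega⟩
    · rw [hordτ]
      exact h2α.ne'
  -- multiplication by `w` maps V₁ isomorphically onto V₂
  set μ : L →ₗ[K] L := LinearMap.mulLeft K w with hμ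
  have hinj : Function.Injective μ := fun a b h => by
    have : w * a = w * b := h
    exact mul_left_cancel₀ hw0 this
  have hmap : Submodule.map μ (LinearMap.ker (τ.toLinearMap - LinearMap.id))
      = LinearMap.ker (τ.toLinearMap + LinearMap.id) := by
    ext x
    simp only [Submodule.mem_map, LinearMap.mem_ker, LinearMap.sub_apply, LinearMap.add_apply,
      AlgEquiv.toLinearMap_apply, LinearMap.id_apply, sub_eq_zero, hμ, LinearMap.mulLeft_apply]
    constructor
    · rintro ⟨b, hb, rfl⟩
      rw [map_mul, hw, hb]
      ring
    · intro hx
      refine ⟨w⁻¹ * x, ?_, by field_simp⟩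
      have hτx : τ x = -x := by linear_combination hx
      rw [map_mul, map_inv₀, hw, hτx]
      field_simp
  rw [← hmap]
  rw [← LinearEquiv.finrank_eq (Submodule.equivMapOfInjective μ hinj _)]
  exact dim1
end

section
/- Let K be a field and n ≥ 1. If S is a K-subspace of the space M(n,K) of n×n matrices over K all of whose nonzero elements are invertible, then dim_K S ≤ n. Equivalently, every K-subspace of M(n,K) of dimension greater than n contains a nonzero singular matrix. -/
open Module

lemma aux_dim_le (K : Type*) [Field K] (n : ℕ) (hn : 1 ≤ n)
    (S : Submodule K (Matrix (Fin n) (Fin n) K))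
    (h : ∀ A ∈ S, A ≠ 0 → IsUnit A) : finrank K S ≤ n := by
  haveI : NeZero n := ⟨by omega⟩
  set v : Fin n → K := Pi.single 0 1 with hv
  let f : S →ₗ[K] (Fin n → K) :=
    { toFun := fun A => (A : Matrix (Fin n) (Fin n) K).mulVec v
      map_add' := fun A B => by simp [Matrix.add_mulVec]
      map_smul' := fun c A => by simp [Matrix.smul_mulVec] }
  have hf : Function.Injective f := by
    rw [injective_iff_map_eq_zero]
    intro A hA
    by_contra hA0
    have hu : IsUnit (A : Matrix (Fin n) (Fin n) K) := by
      refine h A A.2 ?_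
      exact fun h0 => hA0 (Subtype.ext h0)
    have hinj := Matrix.mulVec_injective_iff_isUnit.2 hu
    have : v = 0 := by
      apply hinj
      simpa [Matrix.mulVec_zero, f] using hA
    have := congrFun this 0
    simp [hv, Pi.single_eq_same] at this
  calc finrank K S ≤ finrank K (Fin n → K) := LinearMap.finrank_le_finrank_of_injective hf
    _ = n := by simp

/-- Let `K` be a field and `n ≥ 1`.  If `S` is a `K`-subspace of the space
`M(n,K)` of `n×n` matrices over `K` all of whose nonzero elements are invertible, then
`dim_K S ≤ n`.  Equivalently, every `K`-subspace of `M(n,K)` of dimension greater than `n`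
contains a nonzero singular matrix. -/
theorem dim_le_of_all_invertible (K : Type*) [Field K] (n : ℕ) (hn : 1 ≤ n) :
    (∀ S : Submodule K (Matrix (Fin n) (Fin n) K),
      (∀ A ∈ S, A ≠ 0 → IsUnit A) → finrank K S ≤ n) ∧
    (∀ S : Submodule K (Matrix (Fin n) (Fin n) K),
      n < finrank K S → ∃ A ∈ S, A ≠ 0 ∧ ¬ IsUnit A) := by
  refine ⟨fun S h => aux_dim_le K n hn S h, fun S hS => ?_⟩
  by_contra hc
  push_neg at hc
  have : finrank K S ≤ n := aux_dim_le K n hn S hc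
  omega
end

section
/- Let K be a field, m ≥ 1, and let U be a K-subspace of M(m,K) all of whose nonzero elements are invertible. Then the set S of 2m×2m block matrices of the form [[0, A],[Aᵀ, 0]] with A ∈ U is a K-subspace of the space S(2m,K) of symmetric 2m×2m matrices, S has the same K-dimension as U, and every nonzero element of S is invertible. In particular μ_{2m}(K) ≥ τ_m(K). -/
open Module Matrix

/-- `τ_n(K)`: the maximal dimension of a `K`-subspace of `M(n,K)` all of whose nonzero
elements are invertible. -/
noncomputable def tauInv (K : Type*) [Field K] (n : ℕ) : ℕ :=
  sSup {d | ∃ S : Submodule K (Matrix (Fin n) (Fin n) K),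
    (∀ A ∈ S, A ≠ 0 → IsUnit A) ∧ finrank K S = d}

/-- `μ_n(K)`: the maximal dimension of a `K`-subspace of `S(n,K)` (symmetric `n×n`
matrices) all of whose nonzero elements are invertible. -/
noncomputable def muInv (K : Type*) [Field K] (n : ℕ) : ℕ :=
  sSup {d | ∃ S : Submodule K (Matrix (Fin n) (Fin n) K),
    (∀ A ∈ S, A.IsSymm) ∧ (∀ A ∈ S, A ≠ 0 → IsUnit A) ∧ finrank K S = d}

noncomputable def blockMap (K : Type*) [Field K] (m : ℕ) (e : Fin m ⊕ Fin m ≃ Fin (2 * m)) :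
    Matrix (Fin m) (Fin m) K →ₗ[K] Matrix (Fin (2 * m)) (Fin (2 * m)) K where
  toFun A := Matrix.reindex e e (Matrix.fromBlocks 0 A Aᵀ 0)
  map_add' A B := by
    rw [show Matrix.fromBlocks 0 (A + B) (A + B)ᵀ (0 : Matrix (Fin m) (Fin m) K) =
      Matrix.fromBlocks 0 A Aᵀ 0 + Matrix.fromBlocks 0 B Bᵀ 0 by
        rw [Matrix.fromBlocks_add]; simp [Matrix.transpose_add]]
    simp [Matrix.submatrix_add]
  map_smul' c A := by
    rw [show Matrix.fromBlocks 0 (c • A) (c • A)ᵀ (0 : Matrix (Fin m) (Fin m) K) =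
      c • Matrix.fromBlocks 0 A Aᵀ 0 by
        rw [Matrix.fromBlocks_smul]; simp [Matrix.transpose_smul]]
    simp [Matrix.submatrix_smul]

lemma blockMap_inj (K : Type*) [Field K] (m : ℕ) (e : Fin m ⊕ Fin m ≃ Fin (2 * m)) :
    Function.Injective (blockMap K m e) := by
  rw [injective_iff_map_eq_zero]
  intro A hA
  have h : Matrix.fromBlocks 0 A Aᵀ (0 : Matrix (Fin m) (Fin m) K) = 0 := by
    have := congrArg (Matrix.reindex e.symm e.symm) hA
    simpa [blockMap] using this
  have := congrArg Matrix.toBlocks₁₂ h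
  rw [Matrix.toBlocks_fromBlocks₁₂] at this
  ext i j; rw [this]; rfl

lemma aux (K : Type*) [Field K] (m : ℕ)
    (U : Submodule K (Matrix (Fin m) (Fin m) K))
    (hU : ∀ A ∈ U, A ≠ 0 → IsUnit A)
    (e : Fin m ⊕ Fin m ≃ Fin (2 * m))
    (S : Submodule K (Matrix (Fin (2 * m)) (Fin (2 * m)) K))
    (hS : S = Submodule.span K (Set.range fun A : U =>
      Matrix.reindex e e (Matrix.fromBlocks 0 (A : Matrix (Fin m) (Fin m) K)
        (A : Matrix (Fin m) (Fin m) K)ᵀ 0))) :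
    (S : Set (Matrix (Fin (2 * m)) (Fin (2 * m)) K)) = Set.range (fun A : U =>
      Matrix.reindex e e (Matrix.fromBlocks 0 (A : Matrix (Fin m) (Fin m) K)
        (A : Matrix (Fin m) (Fin m) K)ᵀ 0)) ∧
    (∀ B ∈ S, B.IsSymm) ∧
    finrank K S = finrank K U ∧
    (∀ B ∈ S, B ≠ 0 → IsUnit B) := by
  have hrange : Set.range (fun A : U =>
      Matrix.reindex e e (Matrix.fromBlocks 0 (A : Matrix (Fin m) (Fin m) K)
        (A : Matrix (Fin m) (Fin m) K)ᵀ 0))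
      = (LinearMap.range ((blockMap K m e).comp U.subtype) :
          Set (Matrix (Fin (2 * m)) (Fin (2 * m)) K)) := by
    rw [LinearMap.coe_range]
    rfl
  have hSr : S = LinearMap.range ((blockMap K m e).comp U.subtype) := by
    rw [hS, hrange, Submodule.span_eq]
  refine ⟨?_, ?_, ?_, ?_⟩
  · rw [hrange, hSr]
  · intro B hB
    rw [hSr] at hB
    obtain ⟨A, rfl⟩ := hB
    show _ᵀ = _
    simp only [blockMap, LinearMap.comp_apply, LinearMap.coe_mk, AddHom.coe_mk,
      Submodule.coe_subtype]
    rw [Matrix.transpose_reindex, Matrix.fromBlocks_transpose]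
    simp
  · rw [hSr]
    exact LinearMap.finrank_range_of_inj
      ((blockMap_inj K m e).comp U.injective_subtype)
  · intro B hB hB0
    rw [hSr] at hB
    obtain ⟨A, rfl⟩ := hB
    have hA0 : (A : Matrix (Fin m) (Fin m) K) ≠ 0 := by
      intro h
      apply hB0
      have : ((blockMap K m e).comp U.subtype) A = ((blockMap K m e).comp U.subtype) 0 := by
        simp [LinearMap.comp_apply, h]
      simpa using this
    have hAu : IsUnit (A : Matrix (Fin m) (Fin m) K) := hU A A.2 hA0
    have hdet : IsUnit (A : Matrix (Fin m) (Fin m) K).det :=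
      (Matrix.isUnit_iff_isUnit_det _).mp hAu
    have hdetT : IsUnit (A : Matrix (Fin m) (Fin m) K)ᵀ.det := by
      rwa [Matrix.det_transpose]
    set A' := (A : Matrix (Fin m) (Fin m) K)
    have h1 : Matrix.fromBlocks 0 A' A'ᵀ 0 * Matrix.fromBlocks 0 (A'ᵀ)⁻¹ A'⁻¹ 0 = 1 := by
      rw [Matrix.fromBlocks_multiply]
      simp [Matrix.mul_nonsing_inv _ hdet, Matrix.mul_nonsing_inv _ hdetT,
        ← Matrix.fromBlocks_one]
    have h2 : Matrix.fromBlocks 0 (A'ᵀ)⁻¹ A'⁻¹ 0 * Matrix.fromBlocks 0 A' A'ᵀ 0 = 1 := by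
      rw [Matrix.fromBlocks_multiply]
      simp [Matrix.nonsing_inv_mul _ hdet, Matrix.nonsing_inv_mul _ hdetT,
        ← Matrix.fromBlocks_one]
    have hblock : IsUnit (Matrix.fromBlocks 0 A' A'ᵀ 0) :=
      ⟨⟨_, _, h1, h2⟩, rfl⟩
    have := hblock.map (Matrix.reindexAlgEquiv K K e)
    simpa [blockMap, Matrix.reindexAlgEquiv_apply] using this

lemma tau_le_mu (K : Type*) [Field K] (m : ℕ) (e : Fin m ⊕ Fin m ≃ Fin (2 * m)) :
    tauInv K m ≤ muInv K (2 * m) := by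
  apply csSup_le_csSup
  · refine ⟨finrank K (Matrix (Fin (2 * m)) (Fin (2 * m)) K), ?_⟩
    rintro d ⟨S, -, -, rfl⟩
    exact S.finrank_le
  · exact ⟨0, ⊥, fun A hA h0 => absurd ((Submodule.mem_bot K).mp hA) h0, finrank_bot K _⟩
  · rintro d ⟨U, hU, rfl⟩
    obtain ⟨h1, h2, h3, h4⟩ := aux K m U hU e _ rfl
    exact ⟨_, h2, h4, h3⟩

/-- Let `K` be a field, `m ≥ 1`, and let `U` be a `K`-subspace of `M(m,K)`
all of whose nonzero elements are invertible.  Then the set `S` of `2m×2m` block matrices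
of the form `[[0, A],[Aᵀ, 0]]` with `A ∈ U` is a `K`-subspace of `S(2m,K)`, `S` has the
same `K`-dimension as `U`, and every nonzero element of `S` is invertible.  In particular
`μ_{2m}(K) ≥ τ_m(K)`.  (Block matrices are reindexed from `Fin m ⊕ Fin m` to `Fin (2m)`.) -/
theorem block_construction (K : Type*) [Field K] (m : ℕ) (hm : 1 ≤ m)
    (U : Submodule K (Matrix (Fin m) (Fin m) K))
    (hU : ∀ A ∈ U, A ≠ 0 → IsUnit A)
    (e : Fin m ⊕ Fin m ≃ Fin (2 * m))
    (he : e = finSumFinEquiv.trans (finCongr (two_mul m).symm))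
    (S : Submodule K (Matrix (Fin (2 * m)) (Fin (2 * m)) K))
    (hS : S = Submodule.span K (Set.range fun A : U =>
      Matrix.reindex e e (Matrix.fromBlocks 0 (A : Matrix (Fin m) (Fin m) K)
        (A : Matrix (Fin m) (Fin m) K)ᵀ 0))) :
    (S : Set (Matrix (Fin (2 * m)) (Fin (2 * m)) K)) = Set.range (fun A : U =>
      Matrix.reindex e e (Matrix.fromBlocks 0 (A : Matrix (Fin m) (Fin m) K)
        (A : Matrix (Fin m) (Fin m) K)ᵀ 0)) ∧
    (∀ B ∈ S, B.IsSymm) ∧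
    finrank K S = finrank K U ∧
    (∀ B ∈ S, B ≠ 0 → IsUnit B) ∧
    tauInv K m ≤ muInv K (2 * m) := by
  obtain ⟨h1, h2, h3, h4⟩ := aux K m U hU e S hS
  exact ⟨h1, h2, h3, h4, tau_le_mu K m e⟩
end

section
/- Let K be a finite field of odd characteristic and n ≥ 1. Then there exists a K-subspace of the space S(n,K) of symmetric n×n matrices over K of dimension n all of whose nonzero elements are invertible; consequently μ_n(K) = τ_n(K) = n. -/
open Module

open Polynomial in


universe uK in
private lemma exists_ext (K : Type uK) [Field K] [Finite K] (n : ℕ) (hn : n ≠ 0) :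
    ∃ (L : Type uK) (_ : Field L) (_ : Algebra K L) (_ : FiniteDimensional K L),
      finrank K L = n := by
  cases nonempty_fintype K
  obtain ⟨p, hp⟩ := CharP.exists K
  haveI : CharP K p := hp
  obtain ⟨k, hpp, hcard⟩ := FiniteField.card K p
  haveI : Fact p.Prime := ⟨hpp⟩
  have hq1 : 1 < Fintype.card K := Fintype.one_lt_card
  set q := Fintype.card K with hq
  set g : K[X] := X ^ q ^ n - X with hg
  have hpq : p ∣ q := by rw [hcard]; exact dvd_pow_self p k.pos.ne'
  have hsep : g.Separable := galois_poly_separable p (q ^ n) (dvd_pow hpq hn)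
  refine ⟨g.SplittingField, inferInstance, inferInstance, inferInstance, ?_⟩
  set L := g.SplittingField with hL
  haveI : Finite L := Module.finite_of_finite K
  haveI : Fintype L := Fintype.ofFinite L
  haveI : CharP L p := charP_of_injective_algebraMap' K (A := L) p
  haveI : ExpChar L p := ExpChar.prime hpp
  have hgdeg : g.natDegree = q ^ n := FiniteField.X_pow_card_pow_sub_X_natDegree_eq _ hn hq1
  have hgne : g ≠ 0 := FiniteField.X_pow_card_pow_sub_X_ne_zero _ hn hq1
  have hkn : q ^ n = p ^ (k * n) := by rw [hcard, ← pow_mul]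
  have key : ∀ x : L, x ^ q ^ n = x := by
    intro x
    have hx : x ∈ Subring.closure (Set.range (algebraMap K L) ∪ g.rootSet L) := by
      rw [← Algebra.mem_adjoin_iff, Polynomial.SplittingField.adjoin_rootSet]
      exact trivial
    have hle : Subring.closure (Set.range (algebraMap K L) ∪ g.rootSet L)
        ≤ RingHom.eqLocus (iterateFrobenius L p (k * n)) (RingHom.id L) := by
      rw [Subring.closure_le]
      rintro y (⟨a, rfl⟩ | hy)
      · show iterateFrobenius L p (k * n) _ = RingHom.id L _
        rw [iterateFrobenius_def, RingHom.id_apply, ← map_pow, ← hkn,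
          FiniteField.pow_card_pow]
      · show iterateFrobenius L p (k * n) _ = RingHom.id L _
        rw [iterateFrobenius_def, RingHom.id_apply, ← hkn]
        have h2 := (Polynomial.mem_rootSet_of_ne hgne).mp hy
        simp only [hg, map_sub, map_pow, aeval_X, sub_eq_zero] at h2
        exact h2
    have h3 := hle hx
    have : iterateFrobenius L p (k * n) x = RingHom.id L x := h3
    rwa [iterateFrobenius_def, RingHom.id_apply, ← hkn] at this
  classical
  have hcardL : Fintype.card L = q ^ n := by
    apply le_antisymm
    · have hmapne : g.map (algebraMap K L) ≠ 0 :=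
        Polynomial.map_ne_zero hgne
      have hsub : (Finset.univ : Finset L) ⊆ (g.map (algebraMap K L)).roots.toFinset := by
        intro x _
        rw [Multiset.mem_toFinset, Polynomial.mem_roots hmapne]
        show Polynomial.eval x (g.map (algebraMap K L)) = 0
        simp [hg, key x, sub_eq_zero]
      calc Fintype.card L = (Finset.univ : Finset L).card := rfl
        _ ≤ (g.map (algebraMap K L)).roots.toFinset.card := Finset.card_le_card hsub
        _ ≤ Multiset.card (g.map (algebraMap K L)).roots := Multiset.toFinset_card_le _
        _ ≤ (g.map (algebraMap K L)).natDegree := Polynomial.card_roots' _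
        _ = g.natDegree := Polynomial.natDegree_map _
        _ = q ^ n := hgdeg
    · have hcr : Fintype.card (g.rootSet L) = g.natDegree :=
        Polynomial.card_rootSet_eq_natDegree hsep (Polynomial.SplittingField.splits g)
      calc q ^ n = Fintype.card (g.rootSet L) := by rw [hcr, hgdeg]
        _ ≤ Fintype.card L := Fintype.card_le_of_injective _ Subtype.val_injective
  have hpow := card_eq_pow_finrank (K := K) (V := L)
  rw [hcardL, ← hq] at hpow
  exact (Nat.pow_right_injective hq1 hpow.symm)



private lemma exists_symm_space (K : Type*) [Field K] [Finite K] (n : ℕ)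
    (L : Type*) [Field L] [Algebra K L] [FiniteDimensional K L] (hrank : finrank K L = n) :
    ∃ S : Submodule K (Matrix (Fin n) (Fin n) K),
      (∀ A ∈ S, A.IsSymm) ∧ (∀ A ∈ S, A ≠ 0 → IsUnit A) ∧ finrank K S = n := by
  classical
  haveI : Finite L := Module.finite_of_finite K
  haveI : Algebra.IsSeparable K L := (inferInstance : IsGalois K L).to_isSeparable
  have hnd := traceForm_nondegenerate K L
  let e : Basis (Fin n) K L := (Module.finBasis K L).reindex (finCongr hrank)
  let form : L → LinearMap.BilinForm K L := fun b =>
    LinearMap.compl₂ (Algebra.traceForm K L) (LinearMap.mulLeft K b)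
  have form_apply : ∀ b x y : L, form b x y = Algebra.trace K L (x * (b * y)) := by
    intro b x y
    simp [form, Algebra.traceForm_apply]
  let Φ : L →ₗ[K] Matrix (Fin n) (Fin n) K :=
    { toFun := fun b => LinearMap.BilinForm.toMatrix e (form b)
      map_add' := by
        intro a b
        ext i j
        simp [BilinForm.toMatrix_apply, form_apply, add_mul, mul_add]
      map_smul' := by
        intro c b
        ext i j
        simp only [BilinForm.toMatrix_apply, form_apply, Matrix.smul_apply, smul_eq_mul,
          RingHom.id_apply]
        rw [smul_mul_assoc, mul_smul_comm, map_smul, smul_eq_mul] }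
  have Φ_apply : ∀ b, Φ b = LinearMap.BilinForm.toMatrix e (form b) := fun _ => rfl
  have hsymm : ∀ b, (Φ b).IsSymm := by
    intro b
    apply Matrix.IsSymm.ext
    intro i j
    rw [Φ_apply]
    simp only [BilinForm.toMatrix_apply, form_apply]
    ring_nf
  have hunit : ∀ b : L, b ≠ 0 → IsUnit (Φ b) := by
    intro b hb
    have hndb : (form b).Nondegenerate := by
      refine LinearMap.BilinForm.Nondegenerate.ofSeparatingLeft ?_
      intro x hx
      have h1 : ∀ y, Algebra.traceForm K L (b * x) y = 0 := by
        intro y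
        rw [Algebra.traceForm_apply]
        have := hx y
        rw [form_apply] at this
        rw [← this]; ring_nf
      have h2 := hnd.1 (b * x) h1
      rcases mul_eq_zero.mp h2 with h | h
      · exact absurd h hb
      · exact h
    rw [LinearMap.BilinForm.nondegenerate_iff_det_ne_zero e] at hndb
    rw [Φ_apply, Matrix.isUnit_iff_isUnit_det]
    exact hndb.isUnit
  have hinj : Function.Injective Φ := by
    intro a b hab
    have h0 : form a = form b := (LinearMap.BilinForm.toMatrix e).injective hab
    have : ∀ y, Algebra.traceForm K L a y = Algebra.traceForm K L b y := by
      intro y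
      have h1 := LinearMap.congr_fun (LinearMap.congr_fun h0 (1 : L)) y
      simpa [form_apply, Algebra.traceForm_apply] using h1
    by_contra hne
    have : ∀ y, Algebra.traceForm K L (a - b) y = 0 := by
      intro y; simp [map_sub, LinearMap.sub_apply, this y]
    have := hnd.1 (a - b) this
    exact hne (sub_eq_zero.mp this)
  refine ⟨LinearMap.range Φ, ?_, ?_, ?_⟩
  · rintro A ⟨b, rfl⟩
    exact hsymm b
  · rintro A ⟨b, rfl⟩ hA
    refine hunit b ?_
    rintro rfl
    exact hA (map_zero Φ)
  · rw [LinearMap.finrank_range_of_inj hinj, hrank]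


private lemma dim_le_n (K : Type*) [Field K] {n : ℕ} (hn : 1 ≤ n)
    (S : Submodule K (Matrix (Fin n) (Fin n) K))
    (hS : ∀ A ∈ S, A ≠ 0 → IsUnit A) : finrank K S ≤ n := by
  classical
  let v : Fin n → K := fun _ => 1
  let ψ : S →ₗ[K] (Fin n → K) :=
    { toFun := fun A => (A : Matrix (Fin n) (Fin n) K).mulVec v
      map_add' := by intro A B; simp [Matrix.add_mulVec]
      map_smul' := by intro c A; simp [Matrix.smul_mulVec] }
  have hinj : Function.Injective ψ := by
    rw [injective_iff_map_eq_zero]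
    intro A hA
    by_contra hne
    have hA0 : (A : Matrix (Fin n) (Fin n) K) ≠ 0 := by
      simpa [Submodule.coe_eq_zero] using hne
    obtain ⟨u, hu⟩ := hS A A.2 hA0
    have hv : v = 0 := by
      have h1 : (↑u⁻¹ : Matrix (Fin n) (Fin n) K).mulVec
          ((A : Matrix (Fin n) (Fin n) K).mulVec v) = v := by
        rw [Matrix.mulVec_mulVec, ← hu, ← Units.val_mul, inv_mul_cancel, Units.val_one,
          Matrix.one_mulVec]
      have h2 : (A : Matrix (Fin n) (Fin n) K).mulVec v = 0 := hA
      rw [h2, Matrix.mulVec_zero] at h1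
      exact h1.symm
    have : (1 : K) = 0 := congrFun hv ⟨0, hn⟩
    exact one_ne_zero this
  calc finrank K S ≤ finrank K (Fin n → K) := LinearMap.finrank_le_finrank_of_injective hinj
    _ = n := by simp

/-- Let `K` be a finite field of odd characteristic and `n ≥ 1`.  Then there
exists a `K`-subspace of `S(n,K)` of dimension `n` all of whose nonzero elements are
invertible; consequently `μ_n(K) = τ_n(K) = n`. -/
theorem mu_tau_finite_field (K : Type*) [Field K] [Finite K]
    (hchar : ringChar K ≠ 2) (n : ℕ) (hn : 1 ≤ n) :
    (∃ S : Submodule K (Matrix (Fin n) (Fin n) K),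
      (∀ A ∈ S, A.IsSymm) ∧ (∀ A ∈ S, A ≠ 0 → IsUnit A) ∧ finrank K S = n) ∧
    muInv K n = n ∧ tauInv K n = n := by
  obtain ⟨L, _, _, _, hrank⟩ := exists_ext K n (by omega)
  obtain ⟨S, hsym, hunit, hfr⟩ := exists_symm_space K n L hrank
  have hubμ : ∀ d ∈ {d | ∃ S : Submodule K (Matrix (Fin n) (Fin n) K),
      (∀ A ∈ S, A.IsSymm) ∧ (∀ A ∈ S, A ≠ 0 → IsUnit A) ∧ finrank K S = d}, d ≤ n := by
    rintro d ⟨T, -, hT, rfl⟩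
    exact dim_le_n K hn T hT
  have hubτ : ∀ d ∈ {d | ∃ S : Submodule K (Matrix (Fin n) (Fin n) K),
      (∀ A ∈ S, A ≠ 0 → IsUnit A) ∧ finrank K S = d}, d ≤ n := by
    rintro d ⟨T, hT, rfl⟩
    exact dim_le_n K hn T hT
  have hmemμ : n ∈ {d | ∃ S : Submodule K (Matrix (Fin n) (Fin n) K),
      (∀ A ∈ S, A.IsSymm) ∧ (∀ A ∈ S, A ≠ 0 → IsUnit A) ∧ finrank K S = d} :=
    ⟨S, hsym, hunit, hfr⟩
  have hmemτ : n ∈ {d | ∃ S : Submodule K (Matrix (Fin n) (Fin n) K),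
      (∀ A ∈ S, A ≠ 0 → IsUnit A) ∧ finrank K S = d} := ⟨S, hunit, hfr⟩
  refine ⟨⟨S, hsym, hunit, hfr⟩, ?_, ?_⟩
  · exact le_antisymm (csSup_le ⟨n, hmemμ⟩ hubμ) (le_csSup ⟨n, hubμ⟩ hmemμ)
  · exact le_antisymm (csSup_le ⟨n, hmemτ⟩ hubτ) (le_csSup ⟨n, hubτ⟩ hmemτ)
end
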